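/- arXiv:2309.04236 — 6 statements merged into one kernel-verified Lean document; each statement's English description precedes it below -/
import Mathlib

section
/- Let H be a real separable Hilbert space, let T and S be positive bounded linear operators on H, and let λ > 0. If ‖(T + λI)^{-1/2}(T − S)(T + λI)^{-1/2}‖ ≤ 1/4, then ‖(S + λI)^{-1/2}(T + λI)^{1/2}‖ ≤ 2√3/3. -/
open ContinuousLinearMap

/-- Real powers of a (positive) bounded operator on a real Hilbert space, defined via the
continuous functional calculus. -/
noncomputable def opow {E : Type*} [NormedAddCommGroup E] [InnerProductSpace ℝ E]
    [CompleteSpace E]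
    [ContinuousFunctionalCalculus ℝ (E →L[ℝ] E) (IsSelfAdjoint : (E →L[ℝ] E) → Prop)]
    (A : E →L[ℝ] E) (t : ℝ) : E →L[ℝ] E :=
  cfc (fun x : ℝ => x ^ t) A

section Aux

variable {H : Type*} [NormedAddCommGroup H] [InnerProductSpace ℝ H] [CompleteSpace H]
  [ContinuousFunctionalCalculus ℝ (H →L[ℝ] H) (IsSelfAdjoint : (H →L[ℝ] H) → Prop)]

lemma opow_contOn {A : H →L[ℝ] H} {lam : ℝ} (hlam : 0 < lam)
    (hsp : ∀ x ∈ spectrum ℝ A, lam ≤ x) (t : ℝ) :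
    ContinuousOn (fun x : ℝ => x ^ t) (spectrum ℝ A) := fun x hx =>
  (Real.continuousAt_rpow_const x t (Or.inl (hlam.trans_le (hsp x hx)).ne')).continuousWithinAt

lemma opow_isSelfAdjoint (A : H →L[ℝ] H) (t : ℝ) : IsSelfAdjoint (opow A t) :=
  cfc_predicate _ A

lemma opow_mul_opow {A : H →L[ℝ] H} {lam : ℝ} (hlam : 0 < lam)
    (hsp : ∀ x ∈ spectrum ℝ A, lam ≤ x) (s t : ℝ) :
    opow A s * opow A t = opow A (s + t) := by
  rw [opow, opow, opow, ← cfc_mul _ _ A (opow_contOn hlam hsp s) (opow_contOn hlam hsp t)]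
  exact cfc_congr fun x hx => (Real.rpow_add (hlam.trans_le (hsp x hx)) s t).symm

lemma opow_zero' {A : H →L[ℝ] H} (hA : IsSelfAdjoint A) : opow A 0 = 1 := by
  rw [opow]
  rw [show (fun x : ℝ => x ^ (0 : ℝ)) = fun _ : ℝ => (1 : ℝ) by
    ext x; exact Real.rpow_zero x]
  exact cfc_const_one ℝ A hA

lemma opow_one' {A : H →L[ℝ] H} (hA : IsSelfAdjoint A) : opow A 1 = A := by
  rw [opow]
  rw [show (fun x : ℝ => x ^ (1 : ℝ)) = fun x : ℝ => x by
    ext x; exact Real.rpow_one x]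
  exact cfc_id' ℝ A hA

end Aux

set_option maxHeartbeats 2000000 in
/-- the bound `Q_{D,λ} ≤ 2√3/3` under the event `R_{D,λ} ≤ 1/4`. -/
theorem stmt4
    {H : Type*} [NormedAddCommGroup H] [InnerProductSpace ℝ H] [CompleteSpace H]
    [TopologicalSpace.SeparableSpace H]
    [ContinuousFunctionalCalculus ℝ (H →L[ℝ] H) (IsSelfAdjoint : (H →L[ℝ] H) → Prop)]
    (T S : H →L[ℝ] H) (hT : T.IsPositive) (hS : S.IsPositive)
    (lam : ℝ) (hlam : 0 < lam)
    (hR : ‖opow (T + lam • 1) (-(1 / 2)) ∘L (T - S) ∘L opow (T + lam • 1) (-(1 / 2))‖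
      ≤ 1 / 4) :
    ‖opow (S + lam • 1) (-(1 / 2)) ∘L opow (T + lam • 1) (1 / 2)‖ ≤ 2 * Real.sqrt 3 / 3 := by
  -- abbreviations
  set A : H →L[ℝ] H := T + lam • 1 with hAdef
  set B : H →L[ℝ] H := S + lam • 1 with hBdef
  have hsmul : IsPositive ((lam : ℝ) • (1 : H →L[ℝ] H)) := by
    refine ⟨.smul (star_trivial lam) .one, fun x => ?_⟩
    rw [reApplyInnerSelf_apply]
    simp only [smul_apply, one_apply, real_inner_smul_left]
    exact mul_nonneg hlam.le real_inner_self_nonneg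
  have hA : A.IsPositive := hT.add hsmul
  have hB : B.IsPositive := hS.add hsmul
  -- Spectrum lower bounds
  have spec_lb : ∀ (C : H →L[ℝ] H), C.IsPositive → ∀ x ∈ spectrum ℝ (C + lam • 1), lam ≤ x := by
    intro C hC x hx
    have hres := hC.spectrumRestricts
    rw [SpectrumRestricts.nnreal_iff] at hres
    have halg : (lam : ℝ) • (1 : H →L[ℝ] H) = algebraMap ℝ (H →L[ℝ] H) lam :=
      (Algebra.algebraMap_eq_smul_one lam).symm
    rw [halg, ← spectrum.add_singleton_eq] at hx
    obtain ⟨y, hy, z, hz, rfl⟩ := Set.mem_add.mp hx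
    rw [Set.mem_singleton_iff] at hz
    subst hz
    have := hres y hy
    linarith
  have hAsp : ∀ x ∈ spectrum ℝ A, lam ≤ x := spec_lb T hT
  have hBsp : ∀ x ∈ spectrum ℝ B, lam ≤ x := spec_lb S hS
  -- basic opow algebra
  have hA10 : opow A (1/2) * opow A (-(1/2)) = 1 := by
    rw [opow_mul_opow hlam hAsp]; norm_num; exact opow_zero' hA.isSelfAdjoint
  have hA01 : opow A (-(1/2)) * opow A (1/2) = 1 := by
    rw [opow_mul_opow hlam hAsp]; norm_num; exact opow_zero' hA.isSelfAdjoint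
  have hBhalf : opow B (-(1/2)) * opow B (-(1/2)) = opow B (-1) := by
    rw [opow_mul_opow hlam hBsp]; norm_num
  have hBinvB : opow B (-1) * B = 1 := by
    have h := opow_mul_opow hlam hBsp (-1) 1
    rw [opow_one' hB.isSelfAdjoint] at h
    rw [h]; norm_num; exact opow_zero' hB.isSelfAdjoint
  have hBBinv : B * opow B (-1) = 1 := by
    have h := opow_mul_opow hlam hBsp 1 (-1)
    rw [opow_one' hB.isSelfAdjoint] at h
    rw [h]; norm_num; exact opow_zero' hB.isSelfAdjoint
  have hA1A : opow A (-(1/2)) * A * opow A (-(1/2)) = 1 := by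
    have h := opow_mul_opow hlam hAsp (-(1/2)) 1
    rw [opow_one' hA.isSelfAdjoint] at h
    rw [h, opow_mul_opow hlam hAsp]
    norm_num; exact opow_zero' hA.isSelfAdjoint
  -- the perturbation R' and operator D
  set R' : H →L[ℝ] H := opow A (-(1/2)) * (T - S) * opow A (-(1/2)) with hR'def
  have hR' : ‖R'‖ ≤ 1/4 := by
    have : R' = opow A (-(1/2)) ∘L (T - S) ∘L opow A (-(1/2)) := rfl
    rw [this]; exact hR
  set D : H →L[ℝ] H := opow A (-(1/2)) * B * opow A (-(1/2)) with hDdef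
  have hD : D = 1 - R' := by
    have hBA : B = A - (T - S) := by rw [hAdef, hBdef]; abel
    rw [hDdef, hBA, hR'def]
    rw [mul_sub, sub_mul, hA1A]
  -- D is invertible with inverse E
  set E : H →L[ℝ] H := opow A (1/2) * (opow B (-1) * opow A (1/2)) with hEdef
  have cancelA1 : ∀ X : H →L[ℝ] H, opow A (1/2) * (opow A (-(1/2)) * X) = X := by
    intro X; rw [← mul_assoc, hA10, one_mul]
  have cancelA2 : ∀ X : H →L[ℝ] H, opow A (-(1/2)) * (opow A (1/2) * X) = X := by
    intro X; rw [← mul_assoc, hA01, one_mul]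
  have cancelB1 : ∀ X : H →L[ℝ] H, opow B (-1) * (B * X) = X := by
    intro X; rw [← mul_assoc, hBinvB, one_mul]
  have cancelB2 : ∀ X : H →L[ℝ] H, B * (opow B (-1) * X) = X := by
    intro X; rw [← mul_assoc, hBBinv, one_mul]
  have hED : E * D = 1 := by
    rw [hEdef, hDdef]
    simp only [mul_assoc]
    rw [cancelA1, cancelB1, hA10]
  have hDE : D * E = 1 := by
    rw [hEdef, hDdef]
    simp only [mul_assoc]
    rw [cancelA2, cancelB2, hA01]
  -- norm bound on E
  have hRlt : ‖R'‖ < 1 := lt_of_le_of_lt hR' (by norm_num)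
  set u : (H →L[ℝ] H)ˣ := Units.oneSub R' hRlt with hudef
  have hDu : D = (u : H →L[ℝ] H) := by rw [hD]; rfl
  have hEu : ((u⁻¹ : (H →L[ℝ] H)ˣ) : H →L[ℝ] H) = E :=
    Units.inv_eq_of_mul_eq_one_right (by rw [← hDu]; exact hDE)
  have hEnorm : ‖E‖ ≤ 4/3 := by
    rw [← hEu]
    have h1 : ((u⁻¹ : (H →L[ℝ] H)ˣ) : H →L[ℝ] H) = ∑' n : ℕ, R' ^ n := rfl
    rw [h1]
    have h2 := tsum_geometric_le_of_norm_lt_one R' hRlt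
    have h3 : ‖(1 : H →L[ℝ] H)‖ ≤ 1 := by
      rw [ContinuousLinearMap.one_def]; exact ContinuousLinearMap.norm_id_le
    have h4 : (1 - ‖R'‖)⁻¹ ≤ (3/4 : ℝ)⁻¹ := by
      apply inv_anti₀ (by norm_num)
      linarith
    have h5 : (0:ℝ) ≤ ‖R'‖ := norm_nonneg _
    calc ‖∑' n : ℕ, R' ^ n‖ ≤ ‖(1 : H →L[ℝ] H)‖ - 1 + (1 - ‖R'‖)⁻¹ := h2
      _ ≤ 1 - 1 + (3/4 : ℝ)⁻¹ := by linarith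
      _ = 4/3 := by norm_num
  -- C*C = E
  set C : H →L[ℝ] H := opow B (-(1/2)) * opow A (1/2) with hCdef
  have hstarC : star C = opow A (1/2) * opow B (-(1/2)) := by
    rw [hCdef, star_mul, (opow_isSelfAdjoint A (1/2)).star_eq,
      (opow_isSelfAdjoint B (-(1/2))).star_eq]
  have hCC : star C * C = E := by
    rw [hstarC, hCdef, hEdef]
    simp only [mul_assoc]
    rw [← mul_assoc (opow B (-(1/2))), hBhalf]
  -- conclude
  have hnorm2 : ‖C‖ * ‖C‖ ≤ 4/3 := by
    rw [← CStarRing.norm_star_mul_self, hCC]; exact hEnorm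
  have hgoal : ‖C‖ ≤ 2 * Real.sqrt 3 / 3 := by
    have h3 : Real.sqrt 3 ^ 2 = 3 := Real.sq_sqrt (by norm_num)
    have h4 : (0:ℝ) ≤ Real.sqrt 3 := Real.sqrt_nonneg 3
    nlinarith [norm_nonneg C, sq_nonneg (‖C‖ - 2 * Real.sqrt 3 / 3)]
  have : opow B (-(1/2)) ∘L opow A (1/2) = C := rfl
  rw [this]
  exact hgoal
end

section
/- Let H be a real separable Hilbert space, let A and B be positive bounded linear operators on H, let μ > 0, let c > 0 and β > 0 be real numbers, and let n be a positive integer. If ‖A − B‖ ≤ c·n^{−β} and μ·n^{β} ≥ 2c, then ‖(B + μI)^{-1/2}(A + μI)^{1/2}‖ ≤ √2. -/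
open ContinuousLinearMap
open scoped InnerProductSpace

/-- the bound `Q_{Ξ_n,μ} ≤ √2` for low-discrepancy centers. -/
theorem stmt7
    {H : Type*} [NormedAddCommGroup H] [InnerProductSpace ℝ H] [CompleteSpace H]
    [TopologicalSpace.SeparableSpace H]
    [ContinuousFunctionalCalculus ℝ (H →L[ℝ] H) (IsSelfAdjoint : (H →L[ℝ] H) → Prop)]
    (A B : H →L[ℝ] H) (hA : A.IsPositive) (hB : B.IsPositive)
    (mu c beta : ℝ) (hmu : 0 < mu) (hc : 0 < c) (hbeta : 0 < beta)
    (n : ℕ) (hn : 0 < n)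
    (hAB : ‖A - B‖ ≤ c * (n : ℝ) ^ (-beta))
    (hmun : 2 * c ≤ mu * (n : ℝ) ^ beta) :
    ‖opow (B + mu • 1) (-(1 / 2)) ∘L opow (A + mu • 1) (1 / 2)‖ ≤ Real.sqrt 2 := by
  set a := A + mu • 1 with ha_def
  set b := B + mu • 1 with hb_def
  -- spectra are bounded below by `mu`
  have hspec : ∀ (C : H →L[ℝ] H), C.IsPositive → ∀ x ∈ spectrum ℝ (C + mu • 1), mu ≤ x := by
    intro C hC x hx
    have h0 : ∀ y ∈ spectrum ℝ C, 0 ≤ y := SpectrumRestricts.nnreal_iff.mp hC.spectrumRestricts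
    rw [show (mu • 1 : H →L[ℝ] H) = algebraMap ℝ _ mu from
        (Algebra.algebraMap_eq_smul_one mu).symm, ← spectrum.add_singleton_eq] at hx
    obtain ⟨y, hy, z, hz, rfl⟩ := Set.mem_add.mp hx
    rw [Set.mem_singleton_iff] at hz
    subst hz
    linarith [h0 y hy]
  have hspa : ∀ x ∈ spectrum ℝ a, mu ≤ x := hspec A hA
  have hspb : ∀ x ∈ spectrum ℝ b, mu ≤ x := hspec B hB
  have hsa_a : IsSelfAdjoint a := by
    have h1 : IsSelfAdjoint (mu • (1 : H →L[ℝ] H)) := .smul (star_trivial mu) (IsSelfAdjoint.one _)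
    exact hA.isSelfAdjoint.add h1
  have hsa_b : IsSelfAdjoint b := by
    have h1 : IsSelfAdjoint (mu • (1 : H →L[ℝ] H)) := .smul (star_trivial mu) (IsSelfAdjoint.one _)
    exact hB.isSelfAdjoint.add h1
  set P := opow a (1 / 2) with hP_def
  set Q := opow b (-(1 / 2)) with hQ_def
  set R := cfc (fun x : ℝ => x ^ (-1 : ℝ)) b with hR_def
  -- continuity facts
  have hca : ContinuousOn (fun x : ℝ => x ^ (1/2 : ℝ)) (spectrum ℝ a) :=
    continuousOn_id.rpow_const fun x hx => Or.inl (ne_of_gt (lt_of_lt_of_le hmu (hspa x hx)))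
  have hcb : ContinuousOn (fun x : ℝ => x ^ (-(1/2) : ℝ)) (spectrum ℝ b) :=
    continuousOn_id.rpow_const fun x hx => Or.inl (ne_of_gt (lt_of_lt_of_le hmu (hspb x hx)))
  -- algebraic identities via the functional calculus
  have hPP : P * P = a := by
    calc P * P
        = cfc (fun x : ℝ => x ^ (1/2:ℝ) * x ^ (1/2:ℝ)) a := (cfc_mul _ _ a hca hca).symm
      _ = cfc (fun x : ℝ => x) a := by
          apply cfc_congr
          intro x hx
          have hx0 : (0:ℝ) < x := lt_of_lt_of_le hmu (hspa x hx)
          dsimp only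
          rw [← Real.rpow_add hx0]; norm_num
      _ = a := cfc_id' ℝ a hsa_a
  have hQQ : Q * Q = R := by
    calc Q * Q
        = cfc (fun x : ℝ => x ^ (-(1/2):ℝ) * x ^ (-(1/2):ℝ)) b := (cfc_mul _ _ b hcb hcb).symm
      _ = R := by
          apply cfc_congr
          intro x hx
          have hx0 : (0:ℝ) < x := lt_of_lt_of_le hmu (hspb x hx)
          dsimp only
          rw [← Real.rpow_add hx0]; norm_num
  have hbR : b * R = 1 := by
    have hcR : ContinuousOn (fun x : ℝ => x ^ (-1 : ℝ)) (spectrum ℝ b) :=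
      continuousOn_id.rpow_const fun x hx => Or.inl (ne_of_gt (lt_of_lt_of_le hmu (hspb x hx)))
    have hm := cfc_mul (fun x : ℝ => x) (fun x : ℝ => x ^ (-1:ℝ)) b continuousOn_id hcR
    rw [cfc_id' ℝ b hsa_b] at hm
    rw [hR_def, ← hm]
    calc cfc (fun x : ℝ => x * x ^ (-1:ℝ)) b
        = cfc (fun _ : ℝ => (1:ℝ)) b := by
          apply cfc_congr
          intro x hx
          have hx0 : (0:ℝ) < x := lt_of_lt_of_le hmu (hspb x hx)
          dsimp only
          rw [Real.rpow_neg_one]; field_simp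
      _ = 1 := cfc_const_one ℝ b hsa_b
  have hQbQ : Q * b * Q = 1 := by
    have hm := cfc_mul (fun x : ℝ => x ^ (-(1/2):ℝ)) (fun x : ℝ => x) b hcb continuousOn_id
    rw [cfc_id' ℝ b hsa_b] at hm
    beta_reduce at hm
    have hm2 := cfc_mul (fun x : ℝ => x ^ (-(1/2):ℝ) * x) (fun x : ℝ => x ^ (-(1/2):ℝ)) b
      (hcb.mul continuousOn_id) hcb
    rw [hQ_def, opow, ← hm, ← hm2]
    calc cfc (fun x : ℝ => x ^ (-(1/2):ℝ) * x * x ^ (-(1/2):ℝ)) b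
        = cfc (fun _ : ℝ => (1:ℝ)) b := by
          apply cfc_congr
          intro x hx
          have hx0 : (0:ℝ) < x := lt_of_lt_of_le hmu (hspb x hx)
          dsimp only
          rw [show x ^ (-(1/2):ℝ) * x * x ^ (-(1/2):ℝ)
              = x ^ (-(1/2):ℝ) * x ^ (-(1/2):ℝ) * x from by ring,
            ← Real.rpow_add hx0]
          norm_num
          rw [Real.rpow_neg_one]
          field_simp
      _ = 1 := cfc_const_one ℝ b hsa_b
  have hPsa : IsSelfAdjoint P := cfc_predicate _ a
  have hQsa : IsSelfAdjoint Q := cfc_predicate _ b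
  -- norm bound on R, hence on Q
  have hbnd : ∀ y : H, mu * ‖y‖ ≤ ‖b y‖ := by
    intro y
    have h1 : mu * ‖y‖^2 ≤ ⟪b y, y⟫_ℝ := by
      have h2 := hB.inner_nonneg_left y
      simp only [hb_def, add_apply, smul_apply, ContinuousLinearMap.one_apply, inner_add_left, real_inner_smul_left,
        real_inner_self_eq_norm_sq]
      nlinarith
    have h3 : ⟪b y, y⟫_ℝ ≤ ‖b y‖ * ‖y‖ := real_inner_le_norm _ _
    rcases eq_or_lt_of_le (norm_nonneg y) with h | h
    · simp [← h]
    · have := h1.trans h3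
      rw [sq] at this
      nlinarith
  have hRnorm : ‖R‖ ≤ 1 / mu := by
    apply opNorm_le_bound R (by positivity)
    intro x
    have h1 := hbnd (R x)
    have h2 : b (R x) = x := by
      have : (b * R) x = x := by rw [hbR]; rfl
      simpa [mul_apply] using this
    rw [h2] at h1
    rw [div_mul_eq_mul_div, le_div_iff₀ hmu]
    linarith
  have hQn : ‖Q‖ * ‖Q‖ ≤ 1 / mu := by
    have h1 : ‖Q‖ * ‖Q‖ = ‖star Q * Q‖ := (CStarRing.norm_star_mul_self).symm
    rw [h1, hQsa.star_eq, hQQ]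
    exact hRnorm
  -- the main operator
  set T := Q * P with hT_def
  have hTT : T * star T = Q * (A - B) * Q + 1 := by
    have hstar : star T = P * Q := by
      rw [hT_def, star_mul, hPsa.star_eq, hQsa.star_eq]
    have h1 : T * star T = Q * a * Q := by
      rw [hT_def, hstar, show Q * P * (P * Q) = Q * (P * P) * Q from by noncomm_ring, hPP]
    have h2 : a = (A - B) + b := by
      rw [ha_def, hb_def]; abel
    rw [h1, h2, show Q * ((A - B) + b) * Q = Q * (A - B) * Q + Q * b * Q from by noncomm_ring, hQbQ]
  -- norm estimates
  have hABn : (0:ℝ) ≤ ‖A - B‖ := norm_nonneg _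
  have hnb : (0:ℝ) < (n:ℝ) ^ beta := Real.rpow_pos_of_pos (by exact_mod_cast hn) beta
  have hsmall : c * (n:ℝ) ^ (-beta) ≤ mu / 2 := by
    rw [Real.rpow_neg (by positivity)]
    rw [mul_comm, inv_mul_eq_div, div_le_div_iff₀ hnb (by norm_num)]
    linarith
  have hTTn : ‖T * star T‖ ≤ 2 := by
    rw [hTT]
    calc ‖Q * (A - B) * Q + 1‖ ≤ ‖Q * (A - B) * Q‖ + ‖(1 : H →L[ℝ] H)‖ := norm_add_le _ _
      _ ≤ ‖Q‖ * ‖A - B‖ * ‖Q‖ + 1 := by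
          have h1 : ‖Q * (A - B) * Q‖ ≤ ‖Q‖ * ‖A - B‖ * ‖Q‖ :=
            (norm_mul_le _ _).trans (mul_le_mul_of_nonneg_right (norm_mul_le _ _) (norm_nonneg _))
          have h2 : ‖(1 : H →L[ℝ] H)‖ ≤ 1 := by
            rw [ContinuousLinearMap.one_def]; exact norm_id_le
          linarith
      _ ≤ (1 / mu) * (mu / 2) + 1 := by
          have h1 : ‖Q‖ * ‖A - B‖ * ‖Q‖ = (‖Q‖ * ‖Q‖) * ‖A - B‖ := by ring
          rw [h1]
          have h2 : ‖A - B‖ ≤ mu / 2 := hAB.trans hsmall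
          have h3 : (‖Q‖ * ‖Q‖) * ‖A - B‖ ≤ (1 / mu) * (mu / 2) :=
            mul_le_mul hQn h2 hABn (by positivity)
          linarith
      _ ≤ 2 := by
          have h4 : (1 / mu) * (mu / 2) = 1 / 2 := by field_simp
          rw [h4]; norm_num
  have hTn : ‖T‖ * ‖T‖ ≤ 2 := by
    rw [← CStarRing.norm_self_mul_star]
    exact hTTn
  have : ‖T‖ ≤ Real.sqrt 2 := by
    calc ‖T‖ = Real.sqrt (‖T‖ ^ 2) := (Real.sqrt_sq (norm_nonneg T)).symm
      _ ≤ Real.sqrt 2 := Real.sqrt_le_sqrt (by rw [sq]; exact hTn)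
  show ‖Q * P‖ ≤ Real.sqrt 2
  exact this
end

section
/- Let H and K be separable Hilbert spaces, let S be a positive bounded linear operator on H, let V : K → H be a bounded linear operator with V*V = id_K, and let μ > 0. Then ‖(S + μI)^{1/2} V (V*SV + μ·id_K)^{-1} V* (S + μI)^{1/2}‖ ≤ 1. -/
open ContinuousLinearMap


lemma opow_isSelfAdjoint_s8 {E : Type*} [NormedAddCommGroup E] [InnerProductSpace ℝ E]
    [CompleteSpace E]
    [ContinuousFunctionalCalculus ℝ (E →L[ℝ] E) (IsSelfAdjoint : (E →L[ℝ] E) → Prop)]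
    (A : E →L[ℝ] E) (t : ℝ) : IsSelfAdjoint (opow A t) :=
  cfc_predicate _ _

lemma opow_half_sq {E : Type*} [NormedAddCommGroup E] [InnerProductSpace ℝ E]
    [CompleteSpace E]
    [ContinuousFunctionalCalculus ℝ (E →L[ℝ] E) (IsSelfAdjoint : (E →L[ℝ] E) → Prop)]
    {A : E →L[ℝ] E} (hA : A.IsPositive) :
    opow A (1/2) ∘L opow A (1/2) = A := by
  have hsp : ∀ x ∈ spectrum ℝ A, 0 ≤ x :=
    SpectrumRestricts.nnreal_iff.mp hA.spectrumRestricts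
  have hc : Continuous fun x : ℝ => x ^ (1/2 : ℝ) := by
    rw [continuous_iff_continuousAt]
    exact fun x => Real.continuousAt_rpow_const x _ (Or.inr (by norm_num))
  have h1 : opow A (1/2) ∘L opow A (1/2)
      = cfc (fun x : ℝ => x ^ (1/2:ℝ) * x ^ (1/2:ℝ)) A := by
    rw [cfc_mul _ _ A hc.continuousOn hc.continuousOn, ← mul_def]; rfl
  rw [h1]
  have h2 : cfc (fun x : ℝ => x ^ (1/2:ℝ) * x ^ (1/2:ℝ)) A = cfc (id : ℝ → ℝ) A :=
    cfc_congr fun x hx => by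
      have h0 := hsp x hx
      rw [← Real.rpow_add' h0 (by norm_num)]
      norm_num
  rw [h2, cfc_id ℝ A hA.isSelfAdjoint]

lemma opow_neg_one_inv {E : Type*} [NormedAddCommGroup E] [InnerProductSpace ℝ E]
    [CompleteSpace E]
    [ContinuousFunctionalCalculus ℝ (E →L[ℝ] E) (IsSelfAdjoint : (E →L[ℝ] E) → Prop)]
    {M : E →L[ℝ] E} (hM : IsSelfAdjoint M)
    (hsp : ∀ x ∈ spectrum ℝ M, x ≠ 0) :
    opow M (-1) ∘L M = 1 ∧ M ∘L opow M (-1) = 1 := by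
  have hcont : ContinuousOn (fun x : ℝ => x⁻¹) (spectrum ℝ M) :=
    continuousOn_inv₀.mono fun x hx => by simpa using hsp x hx
  have hopow : opow M (-1) = cfc (fun x : ℝ => x⁻¹) M :=
    cfc_congr fun x _ => Real.rpow_neg_one x
  have hid : cfc (id : ℝ → ℝ) M = M := cfc_id ℝ M hM
  constructor
  · rw [← mul_def, hopow]
    calc cfc (fun x : ℝ => x⁻¹) M * M
        = cfc (fun x : ℝ => x⁻¹) M * cfc (id : ℝ → ℝ) M := by rw [hid]
      _ = cfc (fun x : ℝ => x⁻¹ * x) M := by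
          rw [← cfc_mul _ _ M hcont continuous_id.continuousOn]; rfl
      _ = cfc (1 : ℝ → ℝ) M := cfc_congr fun x hx => inv_mul_cancel₀ (hsp x hx)
      _ = 1 := cfc_one ℝ M hM
  · rw [← mul_def, hopow]
    calc M * cfc (fun x : ℝ => x⁻¹) M
        = cfc (id : ℝ → ℝ) M * cfc (fun x : ℝ => x⁻¹) M := by rw [hid]
      _ = cfc (fun x : ℝ => x * x⁻¹) M := by
          rw [← cfc_mul _ _ M continuous_id.continuousOn hcont]; rfl
      _ = cfc (1 : ℝ → ℝ) M := cfc_congr fun x hx => mul_inv_cancel₀ (hsp x hx)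
      _ = 1 := cfc_one ℝ M hM

lemma smul_one_isPositive {E : Type*} [NormedAddCommGroup E] [InnerProductSpace ℝ E]
    [CompleteSpace E] {c : ℝ} (hc : 0 ≤ c) : (c • (1 : E →L[ℝ] E)).IsPositive := by
  have h1 : IsSelfAdjoint (c • (1 : E →L[ℝ] E)) := by
    rw [IsSelfAdjoint, star_smul, star_trivial, star_one]
  refine isPositive_def'.mpr ⟨h1, fun x => ?_⟩
  simp only [ContinuousLinearMap.reApplyInnerSelf_apply, ContinuousLinearMap.smul_apply,
    ContinuousLinearMap.one_apply, real_inner_smul_left]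
  exact mul_nonneg hc real_inner_self_nonneg

/-- contraction property of the Nyström resolvent. -/
theorem stmt8
    {H K : Type*}
    [NormedAddCommGroup H] [InnerProductSpace ℝ H] [CompleteSpace H]
    [TopologicalSpace.SeparableSpace H]
    [NormedAddCommGroup K] [InnerProductSpace ℝ K] [CompleteSpace K]
    [TopologicalSpace.SeparableSpace K]
    [ContinuousFunctionalCalculus ℝ (H →L[ℝ] H) (IsSelfAdjoint : (H →L[ℝ] H) → Prop)]
    [ContinuousFunctionalCalculus ℝ (K →L[ℝ] K) (IsSelfAdjoint : (K →L[ℝ] K) → Prop)]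
    (S : H →L[ℝ] H) (hS : S.IsPositive)
    (V : K →L[ℝ] H) (hV : adjoint V ∘L V = 1)
    (mu : ℝ) (hmu : 0 < mu) :
    ‖opow (S + mu • 1) (1 / 2) ∘L V ∘L opow (adjoint V ∘L S ∘L V + mu • 1) (-1) ∘L
        adjoint V ∘L opow (S + mu • 1) (1 / 2)‖ ≤ 1 := by
  set A : H →L[ℝ] H := S + mu • 1 with hAdef
  set P : K →L[ℝ] K := adjoint V ∘L S ∘L V with hPdef
  set M : K →L[ℝ] K := P + mu • 1 with hMdef
  set Q : H →L[ℝ] H := opow A (1/2) with hQdef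
  set N : K →L[ℝ] K := opow M (-1) with hNdef
  set T : H →L[ℝ] H := Q ∘L V ∘L N ∘L adjoint V ∘L Q with hTdef
  have hA : A.IsPositive := hS.add (smul_one_isPositive hmu.le)
  have hP : P.IsPositive := hS.adjoint_conj V
  have hM : M.IsPositive := hP.add (smul_one_isPositive hmu.le)
  -- spectrum of M avoids 0
  have hspM : ∀ x ∈ spectrum ℝ M, x ≠ 0 := by
    intro x hx
    have halg : M = P + algebraMap ℝ (K →L[ℝ] K) mu := by
      rw [hMdef, Algebra.algebraMap_eq_smul_one]
    rw [halg, ← spectrum.add_singleton_eq] at hx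
    obtain ⟨y, hy, z, hz, rfl⟩ := Set.mem_add.mp hx
    have hy0 : 0 ≤ y := SpectrumRestricts.nnreal_iff.mp hP.spectrumRestricts y hy
    have hz' : z = mu := Set.mem_singleton_iff.mp hz
    rw [hz']
    positivity
  -- key algebraic identities
  have hQQ : Q ∘L Q = A := opow_half_sq hA
  have hNM : N ∘L M = 1 := (opow_neg_one_inv hM.isSelfAdjoint hspM).1
  have hV' : ∀ x : K, adjoint V (V x) = x := fun x => by
    have := DFunLike.congr_fun hV x
    simpa using this
  have hVAV : ∀ x : K, adjoint V (A (V x)) = M x := by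
    intro x
    simp only [hAdef, hMdef, hPdef, add_apply, smul_apply, ContinuousLinearMap.one_apply, comp_apply,
      map_add, map_smul, hV']
  have hQQ' : ∀ y : H, Q (Q y) = A y := fun y => DFunLike.congr_fun hQQ y
  have hNM' : ∀ y : K, N (M y) = y := fun y => by
    have := DFunLike.congr_fun hNM y
    simpa using this
  -- T is idempotent
  have hTT : T ∘L T = T := by
    ext x
    simp only [hTdef, comp_apply]
    rw [hQQ', hVAV, hNM']
  -- T is self-adjoint
  have hQsa : adjoint Q = Q := isSelfAdjoint_iff'.mp (opow_isSelfAdjoint_s8 A (1/2))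
  have hNsa : adjoint N = N := isSelfAdjoint_iff'.mp (opow_isSelfAdjoint_s8 M (-1))
  have hTsa : adjoint T = T := by
    simp only [hTdef, adjoint_comp, adjoint_adjoint, hQsa, hNsa, comp_assoc]
  -- conclude
  have hnorm : ‖T‖ = ‖T‖ * ‖T‖ := by
    rw [← norm_adjoint_comp_self T, hTsa, hTT]
  nlinarith [norm_nonneg T]
end

section
/- Let H and F be separable Hilbert spaces, let S_n be a positive bounded linear operator on H, let P be the orthogonal projection of H onto the closure of the range of S_n, and let μ > 0. Then for every bounded linear operator G : F → H, ‖(I − P) G‖ ≤ μ^{1/2} ‖(S_n + μI)^{-1/2} G‖. -/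
open ContinuousLinearMap

section Aux

variable {H : Type*} [NormedAddCommGroup H] [InnerProductSpace ℝ H] [CompleteSpace H]

/-- A coercive bounded operator on a real Hilbert space is invertible. -/
lemma isUnit_of_coercive (T : H →L[ℝ] H) (c : ℝ) (hc : 0 < c)
    (hcoer : ∀ x : H, c * ‖x‖ ^ 2 ≤ inner ℝ (T x) x) : IsUnit T := by
  have hbound : ∀ x : H, c * ‖x‖ ≤ ‖T x‖ := by
    intro x
    rcases eq_or_ne x 0 with rfl | hx
    · simp
    · have h1 : c * ‖x‖ ^ 2 ≤ ‖T x‖ * ‖x‖ := (hcoer x).trans (real_inner_le_norm _ _)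
      have hxpos : 0 < ‖x‖ := norm_pos_iff.mpr hx
      nlinarith
  have hker : LinearMap.ker (T : H →ₗ[ℝ] H) = ⊥ := by
    rw [Submodule.eq_bot_iff]
    intro x hx
    have hTx : T x = 0 := hx
    have := hbound x
    rw [hTx, norm_zero] at this
    have : ‖x‖ ≤ 0 := by nlinarith
    exact norm_le_zero_iff.mp this
  have hanti : AntilipschitzWith (⟨c, hc.le⟩ : NNReal)⁻¹ T := by
    apply ContinuousLinearMap.antilipschitz_of_bound
    intro x
    change ‖x‖ ≤ c⁻¹ * ‖T x‖
    calc ‖x‖ = c⁻¹ * (c * ‖x‖) := by field_simp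
      _ ≤ c⁻¹ * ‖T x‖ := mul_le_mul_of_nonneg_left (hbound x) (by positivity)
  have hclosed : IsClosed (Set.range T) := hanti.isClosed_range T.uniformContinuous
  have hclosed' : IsClosed ((LinearMap.range (T : H →ₗ[ℝ] H) : Submodule ℝ H) : Set H) := by
    have hset : ((LinearMap.range (T : H →ₗ[ℝ] H) : Submodule ℝ H) : Set H) = Set.range T := by
      ext x; simp [LinearMap.mem_range]
    rw [hset]; exact hclosed
  have : CompleteSpace (LinearMap.range (T : H →ₗ[ℝ] H) : Submodule ℝ H) := hclosed'.completeSpace_coe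
  have hrange : LinearMap.range (T : H →ₗ[ℝ] H) = ⊤ := by
    rw [← Submodule.orthogonal_eq_bot_iff]
    rw [Submodule.eq_bot_iff]
    intro x hx
    have h0 : inner ℝ (T x) x = (0 : ℝ) := hx (T x) ⟨x, rfl⟩
    have hle := hcoer x
    rw [h0] at hle
    by_contra h
    have h1 : 0 < ‖x‖ := norm_pos_iff.mpr h
    nlinarith [mul_pos (mul_pos hc h1) h1]
  let e := ContinuousLinearEquiv.ofBijective T hker hrange
  have he : (e : H →L[ℝ] H) = T := rfl
  exact ⟨e.toUnit, he⟩

end Aux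

set_option maxHeartbeats 2000000 in
/-- `‖(I − P)G‖ ≤ μ^{1/2} ‖(S_n + μI)^{-1/2} G‖` for the orthogonal projection
`P` onto the closure of the range of the positive operator `S_n`. -/
theorem stmt10
    {H F : Type*}
    [NormedAddCommGroup H] [InnerProductSpace ℝ H] [CompleteSpace H]
    [TopologicalSpace.SeparableSpace H]
    [NormedAddCommGroup F] [InnerProductSpace ℝ F] [CompleteSpace F]
    [TopologicalSpace.SeparableSpace F]
    [ContinuousFunctionalCalculus ℝ (H →L[ℝ] H) (IsSelfAdjoint : (H →L[ℝ] H) → Prop)]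
    (Sn : H →L[ℝ] H) (hSn : Sn.IsPositive)
    (P : H →L[ℝ] H) (hPsa : IsSelfAdjoint P) (hPidem : P ∘L P = P)
    (hPrange : LinearMap.range (P : H →ₗ[ℝ] H) = (LinearMap.range (Sn : H →ₗ[ℝ] H)).topologicalClosure)
    (mu : ℝ) (hmu : 0 < mu)
    (G : F →L[ℝ] H) :
    ‖(1 - P) ∘L G‖ ≤ mu ^ (1 / 2 : ℝ) * ‖opow (Sn + mu • 1) (-(1 / 2)) ∘L G‖ := by
  set B : H →L[ℝ] H := Sn + mu • 1 with hBdef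
  have hSn_inner : ∀ x : H, (0 : ℝ) ≤ inner ℝ (Sn x) x := by
    intro x
    simpa using hSn.inner_nonneg_left x
  have hBsa : IsSelfAdjoint B := by
    rw [isSelfAdjoint_iff_isSymmetric]
    intro x y
    show inner ℝ (B x) y = inner ℝ x (B y)
    rw [hBdef]
    have h := hSn.isSelfAdjoint.isSymmetric x y
    simp only [ContinuousLinearMap.coe_coe, add_apply, smul_apply, ContinuousLinearMap.one_apply,
      inner_add_left, inner_add_right, real_inner_smul_left, real_inner_smul_right] at h ⊢
    rw [h]
  -- spectrum of B lies in [mu, ∞)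
  have hspec : ∀ x ∈ spectrum ℝ B, mu ≤ x := by
    intro x hx
    by_contra hlt
    push_neg at hlt
    apply spectrum.mem_iff.mp hx
    have hunit : IsUnit (B - x • 1) := by
      apply isUnit_of_coercive _ (mu - x) (by linarith)
      intro v
      have hv : (B - x • 1) v = Sn v + (mu - x) • v := by
        simp [hBdef, sub_smul]
        module
      rw [hv, inner_add_left, real_inner_smul_left, real_inner_self_eq_norm_sq]
      nlinarith [hSn_inner v]
    rw [Algebra.algebraMap_eq_smul_one]
    rw [← neg_sub B (x • 1)]
    exact hunit.neg
  have hspec_pos : ∀ x ∈ spectrum ℝ B, (0 : ℝ) < x := fun x hx => lt_of_lt_of_le hmu (hspec x hx)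
  have hcont : ∀ t : ℝ, ContinuousOn (fun x : ℝ => x ^ t) (spectrum ℝ B) := by
    intro t x hx
    exact (Real.continuousAt_rpow_const x t (Or.inl (hspec_pos x hx).ne')).continuousWithinAt
  -- (B^{1/2}) * (B^{-1/2}) = 1
  have hmul : opow B (1 / 2) * opow B (-(1 / 2)) = 1 := by
    rw [opow, opow, ← cfc_mul _ _ B (hcont _) (hcont _)]
    have heq : (spectrum ℝ B).EqOn
        (fun x : ℝ => x ^ (1 / 2 : ℝ) * x ^ (-(1 / 2) : ℝ)) (fun _ => (1 : ℝ)) := by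
      intro x hx
      have hx0 := hspec_pos x hx
      simp only
      rw [← Real.rpow_add hx0]
      norm_num
    rw [cfc_congr heq, cfc_const_one ℝ B hBsa]
  -- (B^{1/2}) * (B^{1/2}) = B
  have hsq : opow B (1 / 2) * opow B (1 / 2) = B := by
    rw [opow, ← cfc_mul _ _ B (hcont _) (hcont _)]
    have heq : (spectrum ℝ B).EqOn
        (fun x : ℝ => x ^ (1 / 2 : ℝ) * x ^ (1 / 2 : ℝ)) _root_.id := by
      intro x hx
      have hx0 := hspec_pos x hx
      simp only [_root_.id]
      rw [← Real.rpow_add hx0]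
      norm_num
    rw [cfc_congr heq, cfc_id ℝ B hBsa]
  have hRsa : IsSelfAdjoint (opow B (1 / 2)) := cfc_predicate _ B
  have hQsa : IsSelfAdjoint ((1 : H →L[ℝ] H) - P) := (IsSelfAdjoint.one _).sub hPsa
  -- factorization
  have hfact : (1 - P) ∘L G
      = ((1 - P) ∘L opow B (1 / 2)) ∘L (opow B (-(1 / 2)) ∘L G) := by
    ext y
    simp only [comp_apply]
    congr 1
    rw [← ContinuousLinearMap.mul_apply, hmul, ContinuousLinearMap.one_apply]
  -- key norm bound on B^{1/2} (1 - P)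
  have hRP : ‖opow B (1 / 2) ∘L (1 - P)‖ ≤ mu ^ (1 / 2 : ℝ) := by
    apply opNorm_le_bound _ (by positivity)
    intro g
    set y : H := ((1 : H →L[ℝ] H) - P) g with hy
    have hPy : P y = 0 := by
      have : P (g - P g) = P g - P (P g) := map_sub P g (P g)
      have hPP : P (P g) = P g := by rw [← comp_apply, hPidem]
      simp [hy, sub_apply, one_apply, this, hPP]
    have hSny : inner ℝ (Sn y) y = (0 : ℝ) := by
      have hmem : Sn y ∈ LinearMap.range (P : H →ₗ[ℝ] H) := by
        rw [hPrange]
        exact Submodule.le_topologicalClosure _ ⟨y, rfl⟩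
      obtain ⟨w, hw⟩ := hmem
      have hPS : P (Sn y) = Sn y := by
        conv_lhs => rw [← hw]
        rw [ContinuousLinearMap.coe_coe, ← comp_apply P P, hPidem]; exact hw
      calc inner ℝ (Sn y) y = inner ℝ (P (Sn y)) y := by rw [hPS]
        _ = inner ℝ (Sn y) (P y) := hPsa.isSymmetric _ _
        _ = 0 := by rw [hPy, inner_zero_right]
    have hnorm2 : ‖opow B (1 / 2) y‖ ^ 2 = mu * ‖y‖ ^ 2 := by
      have h1 : (inner ℝ (opow B (1 / 2) y) (opow B (1 / 2) y) : ℝ) = inner ℝ (B y) y := by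
        calc (inner ℝ (opow B (1 / 2) y) (opow B (1 / 2) y) : ℝ)
            = inner ℝ y (opow B (1 / 2) (opow B (1 / 2) y)) := hRsa.isSymmetric _ _
          _ = inner ℝ y ((opow B (1 / 2) * opow B (1 / 2)) y) := by rw [ContinuousLinearMap.mul_apply]
          _ = inner ℝ y (B y) := by rw [hsq]
          _ = inner ℝ (B y) y := real_inner_comm _ _
      have h2 : (inner ℝ (B y) y : ℝ) = mu * ‖y‖ ^ 2 := by
        have : B y = Sn y + mu • y := by simp [hBdef]
        rw [this, inner_add_left, real_inner_smul_left, hSny,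
          real_inner_self_eq_norm_sq]
        ring
      rw [← real_inner_self_eq_norm_sq, h1, h2]
    have hyg : ‖y‖ ≤ ‖g‖ := by
      have h3 : ‖y‖ ^ 2 = inner ℝ g y := by
        have hQQ : ((1 : H →L[ℝ] H) - P) y = y := by
          simp [sub_apply, one_apply, hPy]
        calc ‖y‖ ^ 2 = inner ℝ y y := (real_inner_self_eq_norm_sq y).symm
          _ = inner ℝ (((1 : H →L[ℝ] H) - P) g) y := by rw [← hy]
          _ = inner ℝ g (((1 : H →L[ℝ] H) - P) y) := hQsa.isSymmetric _ _
          _ = inner ℝ g y := by rw [hQQ]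
      have h4 : (inner ℝ g y : ℝ) ≤ ‖g‖ * ‖y‖ := real_inner_le_norm _ _
      nlinarith [norm_nonneg y, norm_nonneg g]
    have hsqle : ‖opow B (1 / 2) y‖ ^ 2 ≤ (mu ^ (1 / 2 : ℝ) * ‖g‖) ^ 2 := by
      have hmu2 : (mu ^ (1 / 2 : ℝ)) ^ 2 = mu := by
        rw [← Real.rpow_natCast (mu ^ (1 / 2 : ℝ)) 2, ← Real.rpow_mul hmu.le]
        norm_num
      rw [hnorm2, mul_pow, hmu2]
      have : ‖y‖ ^ 2 ≤ ‖g‖ ^ 2 := by nlinarith [norm_nonneg y]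
      nlinarith
    have := Real.sqrt_le_sqrt hsqle
    rwa [Real.sqrt_sq (norm_nonneg _), Real.sqrt_sq (by positivity)] at this
  -- the norm of (1-P) B^{1/2} equals that of its adjoint B^{1/2} (1-P)
  have hadj : ‖(1 - P) ∘L opow B (1 / 2)‖ ≤ mu ^ (1 / 2 : ℝ) := by
    have h5 : ContinuousLinearMap.adjoint ((1 - P) ∘L opow B (1 / 2))
        = opow B (1 / 2) ∘L (1 - P) := by
      rw [ContinuousLinearMap.adjoint_comp, hRsa.adjoint_eq, hQsa.adjoint_eq]
    have h6 : ‖ContinuousLinearMap.adjoint ((1 - P) ∘L opow B (1 / 2))‖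
        = ‖(1 - P) ∘L opow B (1 / 2)‖ :=
      ContinuousLinearMap.adjoint.norm_map _
    rw [← h6, h5]
    exact hRP
  calc ‖(1 - P) ∘L G‖
      = ‖((1 - P) ∘L opow B (1 / 2)) ∘L (opow B (-(1 / 2)) ∘L G)‖ := by rw [hfact]
    _ ≤ ‖(1 - P) ∘L opow B (1 / 2)‖ * ‖opow B (-(1 / 2)) ∘L G‖ := opNorm_comp_le _ _
    _ ≤ mu ^ (1 / 2 : ℝ) * ‖opow B (-(1 / 2)) ∘L G‖ :=
        mul_le_mul_of_nonneg_right hadj (norm_nonneg _)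
end

section
/- Let H and K be real separable Hilbert spaces, let T, S and S_n be positive bounded linear operators on H, and let V : K → H be a bounded linear operator with V*V = id_K and such that VV* equals the orthogonal projection P of H onto the closure of the range of S_n. Let μ > 0. Set Q_μ := ‖(S + μI)^{-1/2}(T + μI)^{1/2}‖, Q*_μ := ‖(T + μI)^{-1/2}(S + μI)^{1/2}‖, and Q_{n,μ} := ‖(S_n + μI)^{-1/2}(T + μI)^{1/2}‖. Then ‖T^{1/2} (V (V*SV + μ·id_K)^{-1} V* S − I)(I − P)‖ ≤ (Q_μ Q*_μ + 1)·μ^{1/2}·Q_{n,μ}. -/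
open ContinuousLinearMap

section AuxNorm
variable {E : Type*} [NormedAddCommGroup E] [InnerProductSpace ℝ E] [CompleteSpace E]

lemma aux_norm_le_one_of_sq (A : E →L[ℝ] E)
    (h : ((1 : E →L[ℝ] E) - adjoint A ∘L A).IsPositive) : ‖A‖ ≤ 1 := by
  refine A.opNorm_le_bound zero_le_one fun x => ?_
  have h1 : 0 ≤ (inner ℝ (((1 : E →L[ℝ] E) - adjoint A ∘L A) x) x : ℝ) := h.inner_nonneg_left x
  have h2 : (inner ℝ ((adjoint A ∘L A) x) x : ℝ) = ‖A x‖ ^ 2 := by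
    rw [comp_apply, adjoint_inner_left, real_inner_self_eq_norm_sq]
  have h3 : (inner ℝ (((1 : E →L[ℝ] E) - adjoint A ∘L A) x) x : ℝ)
      = ‖x‖ ^ 2 - ‖A x‖ ^ 2 := by
    rw [sub_apply, inner_sub_left, h2, ContinuousLinearMap.one_apply, real_inner_self_eq_norm_sq]
  nlinarith [norm_nonneg (A x), norm_nonneg x]

lemma aux_norm_le_one_of_idem (A : E →L[ℝ] E) (hsa : IsSelfAdjoint A)
    (hidem : A ∘L A = A) : ‖A‖ ≤ 1 := by
  refine A.opNorm_le_bound zero_le_one fun x => ?_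
  have h2 : ‖A x‖ ^ 2 = (inner ℝ (A x) x : ℝ) := by
    rw [← real_inner_self_eq_norm_sq, ← hsa.adjoint_eq, adjoint_inner_left]
    · rw [hsa.adjoint_eq, ← comp_apply, hidem]
      exact real_inner_comm _ _
  have h3 : (inner ℝ (A x) x : ℝ) ≤ ‖A x‖ * ‖x‖ := real_inner_le_norm _ _
  nlinarith [norm_nonneg (A x), norm_nonneg x]

end AuxNorm

section AuxCont

lemma aux_contOn_shift_rpow (mu t : ℝ) (hmu : 0 < mu) {s : Set ℝ} (hs : s ⊆ Set.Ici 0) :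
    ContinuousOn (fun x : ℝ => (x + mu) ^ t) s := by
  intro x hx
  have hx0 : (0:ℝ) ≤ x := hs hx
  refine ContinuousAt.continuousWithinAt ?_
  exact ContinuousAt.rpow_const (by fun_prop) (Or.inl (by positivity))

lemma aux_contOn_rpow_nonneg (t : ℝ) (ht : 0 ≤ t) (s : Set ℝ) :
    ContinuousOn (fun x : ℝ => x ^ t) s := fun x _ =>
  (Real.continuousAt_rpow_const x t (Or.inr ht)).continuousWithinAt

end AuxCont

section AuxCFC
variable {E : Type*} [NormedAddCommGroup E] [InnerProductSpace ℝ E] [CompleteSpace E]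
    [ContinuousFunctionalCalculus ℝ (E →L[ℝ] E) (IsSelfAdjoint : (E →L[ℝ] E) → Prop)]

lemma aux_opow_shift (A : E →L[ℝ] E) (hA : IsSelfAdjoint A)
    (hsp : spectrum ℝ A ⊆ Set.Ici 0) (mu t : ℝ) (hmu : 0 < mu) :
    opow (A + mu • 1) t = cfc (fun x : ℝ => (x + mu) ^ t) A := by
  have h1 : A + mu • 1 = cfc (fun x : ℝ => x + mu) A := by
    rw [cfc_add_const mu (fun x : ℝ => x) A continuousOn_id hA, cfc_id' ℝ A hA,
      Algebra.algebraMap_eq_smul_one]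
  have himg : (fun x : ℝ => x + mu) '' spectrum ℝ A ⊆ Set.Ici mu := by
    rintro - ⟨x, hx, rfl⟩
    simpa using hsp hx
  rw [opow, h1, ← cfc_comp' (fun x : ℝ => x ^ t) (fun x : ℝ => x + mu) A
    (fun y hy => (Real.continuousAt_rpow_const y t
      (Or.inl (ne_of_gt (lt_of_lt_of_le hmu (himg hy))))).continuousWithinAt)
    (by fun_prop) hA]

end AuxCFC

section AuxEig
variable {E : Type*} [NormedAddCommGroup E] [InnerProductSpace ℝ E] [CompleteSpace E]
    [ContinuousFunctionalCalculus ℝ (E →L[ℝ] E) (IsSelfAdjoint : (E →L[ℝ] E) → Prop)]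

lemma aux_cfc_comp_smul (A Q : E →L[ℝ] E) (c : ℝ) (hA : IsSelfAdjoint A)
    (hAQ : A ∘L Q = c • Q) (ψ : ℝ → ℝ) (hψ : ContinuousOn ψ (spectrum ℝ A)) :
    cfc ψ A ∘L Q = ψ c • Q := by
  by_cases hQ : Q = 0
  · simp [hQ]
  obtain ⟨x, hx⟩ : ∃ x, Q x ≠ 0 := by
    by_contra h
    push_neg at h
    exact hQ (ContinuousLinearMap.ext fun x => by simpa using h x)
  have hAQx : A (Q x) = c • Q x := by
    have := congrFun (congrArg DFunLike.coe hAQ) x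
    simpa using this
  have hcs : c ∈ spectrum ℝ A := by
    rw [spectrum.mem_iff]
    intro hu
    obtain ⟨u, hu'⟩ := hu
    have h0 : (↑u : E →L[ℝ] E) (Q x) = 0 := by
      rw [hu']
      simp only [ContinuousLinearMap.sub_apply, Algebra.algebraMap_eq_smul_one,
        ContinuousLinearMap.smul_apply, ContinuousLinearMap.one_apply, hAQx, sub_self]
    apply hx
    have h1 : (↑u⁻¹ * ↑u : E →L[ℝ] E) (Q x) = Q x := by
      rw [u.inv_mul, ContinuousLinearMap.one_apply]
    rw [ContinuousLinearMap.mul_apply, h0, map_zero] at h1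
    exact h1.symm
  have hpow : ∀ n : ℕ, (A ^ n) ∘L Q = c ^ n • Q := by
    intro n
    induction n with
    | zero => simp [ContinuousLinearMap.one_def]
    | succ n ih =>
      rw [pow_succ, pow_succ, ContinuousLinearMap.mul_def, ContinuousLinearMap.comp_assoc,
        hAQ, ContinuousLinearMap.comp_smul, ih, smul_smul, mul_comm]
  have hpoly : ∀ p : Polynomial ℝ, (Polynomial.aeval A p) ∘L Q = p.eval c • Q := by
    intro p
    induction p using Polynomial.induction_on' with
    | add p q hp hq =>
      rw [map_add, Polynomial.eval_add, ContinuousLinearMap.add_comp, hp, hq, add_smul]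
    | monomial n a =>
      rw [Polynomial.aeval_monomial, Polynomial.eval_monomial, ← Algebra.smul_def,
        ContinuousLinearMap.smul_comp, hpow, smul_smul]
  have hclosed : IsClosed {f : C(spectrum ℝ A, ℝ) |
      cfcHom hA f * Q - f ⟨c, hcs⟩ • Q = 0} := by
    apply isClosed_eq _ continuous_const
    exact ((cfcHom_continuous hA).mul continuous_const).sub
      (Continuous.smul (f := fun y : C(spectrum ℝ A, ℝ) => y ⟨c, hcs⟩) (g := fun _ => Q)
        (continuous_eval_const (⟨c, hcs⟩ : spectrum ℝ A)) continuous_const)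
  have hker : (polynomialFunctions (spectrum ℝ A) : Set C(spectrum ℝ A, ℝ)) ⊆
      {f | cfcHom hA f * Q - f ⟨c, hcs⟩ • Q = 0} := by
    intro f hf
    rw [polynomialFunctions_coe] at hf
    obtain ⟨p, rfl⟩ := hf
    have hpc : ContinuousOn (fun x : ℝ => p.eval x) (spectrum ℝ A) :=
      p.continuous_aeval.continuousOn
    have h1 : Polynomial.toContinuousMapOnAlgHom (spectrum ℝ A) p
        = ContinuousMap.mk _ hpc.restrict := by
      ext z; rfl
    have h2 : cfcHom hA (Polynomial.toContinuousMapOnAlgHom (spectrum ℝ A) p)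
        = Polynomial.aeval A p := by
      rw [h1, ← cfc_apply (fun x : ℝ => p.eval x) A hA hpc]
      exact cfc_polynomial p A hA
    show cfcHom hA _ * Q - _ • Q = 0
    rw [h2, ContinuousLinearMap.mul_def, hpoly]
    simp [sub_eq_zero]
  have hmem : ∀ f : C(spectrum ℝ A, ℝ), f ∈ closure
      (polynomialFunctions (spectrum ℝ A) : Set C(spectrum ℝ A, ℝ)) := by
    intro f
    have hdense := polynomialFunctions.topologicalClosure (spectrum ℝ A)
    have : (polynomialFunctions (spectrum ℝ A)).topologicalClosure.carrier =
        closure (polynomialFunctions (spectrum ℝ A) : Set C(spectrum ℝ A, ℝ)) := rfl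
    rw [hdense] at this
    rw [← this]
    trivial
  have hall := closure_minimal hker hclosed (hmem ⟨(spectrum ℝ A).restrict ψ, hψ.restrict⟩)
  have : cfcHom hA (⟨(spectrum ℝ A).restrict ψ, hψ.restrict⟩ : C(spectrum ℝ A, ℝ)) * Q
      - ψ c • Q = 0 := hall
  rw [cfc_apply ψ A hA hψ, ← ContinuousLinearMap.mul_def]
  rw [sub_eq_zero] at this
  exact this

end AuxEig

section AuxRpow
variable {E : Type*} [NormedAddCommGroup E] [InnerProductSpace ℝ E] [CompleteSpace E]
    [ContinuousFunctionalCalculus ℝ (E →L[ℝ] E) (IsSelfAdjoint : (E →L[ℝ] E) → Prop)]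

lemma aux_rpow_mul (A : E →L[ℝ] E) (hA : IsSelfAdjoint A)
    (hsp : spectrum ℝ A ⊆ Set.Ici 0) (mu s t : ℝ) (hmu : 0 < mu) :
    cfc (fun x : ℝ => (x + mu) ^ s) A * cfc (fun x : ℝ => (x + mu) ^ t) A
      = cfc (fun x : ℝ => (x + mu) ^ (s + t)) A := by
  rw [← cfc_mul _ _ A (aux_contOn_shift_rpow mu s hmu hsp) (aux_contOn_shift_rpow mu t hmu hsp)]
  exact cfc_congr fun x hx => by
    have hx0 : (0:ℝ) ≤ x := hsp hx
    exact (Real.rpow_add (by positivity) s t).symm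

lemma aux_rpow_zero (A : E →L[ℝ] E) (hA : IsSelfAdjoint A) (mu : ℝ) :
    cfc (fun x : ℝ => (x + mu) ^ (0:ℝ)) A = 1 := by
  have h : (fun x : ℝ => (x + mu) ^ (0:ℝ)) = fun _ : ℝ => (1:ℝ) := by
    funext x; exact Real.rpow_zero _
  rw [h]
  exact cfc_const_one ℝ A hA

lemma aux_rpow_one (A : E →L[ℝ] E) (hA : IsSelfAdjoint A)
    (hsp : spectrum ℝ A ⊆ Set.Ici 0) (mu : ℝ) (hmu : 0 < mu) :
    cfc (fun x : ℝ => (x + mu) ^ (1:ℝ)) A = A + mu • 1 := by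
  have h1 : cfc (fun x : ℝ => (x + mu) ^ (1:ℝ)) A = cfc (fun x : ℝ => x + mu) A :=
    cfc_congr fun x _ => Real.rpow_one _
  rw [h1, cfc_add_const mu (fun x : ℝ => x) A continuousOn_id hA, cfc_id' ℝ A hA,
    Algebra.algebraMap_eq_smul_one]

lemma aux_norm_cfc_le_one (A : E →L[ℝ] E) (hA : IsSelfAdjoint A) (f : ℝ → ℝ)
    (hf : ContinuousOn f (spectrum ℝ A))
    (hbd : ∀ x ∈ spectrum ℝ A, f x * f x ≤ 1) : ‖cfc f A‖ ≤ 1 := by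
  letI := ContinuousLinearMap.instStarOrderedRingRCLike (𝕜 := ℝ) (H := E)
  apply aux_norm_le_one_of_sq
  have hsa : IsSelfAdjoint (cfc f A) := cfc_predicate f A
  have h1 : adjoint (cfc f A) ∘L cfc f A = cfc (fun x => f x * f x) A := by
    rw [← ContinuousLinearMap.star_eq_adjoint, hsa.star_eq, ← ContinuousLinearMap.mul_def,
      ← cfc_mul f f A hf hf]
  rw [← ContinuousLinearMap.nonneg_iff_isPositive, h1]
  have h2 : cfc (fun x : ℝ => 1 - f x * f x) A = 1 - cfc (fun x => f x * f x) A := by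
    rw [cfc_sub (fun _ : ℝ => (1:ℝ)) (fun x => f x * f x) A continuousOn_const (hf.mul hf),
      cfc_const_one ℝ A hA]
  have h3 : 0 ≤ cfc (fun x : ℝ => 1 - f x * f x) A :=
    cfc_nonneg fun x hx => by linarith [hbd x hx]
  rw [h2] at h3
  exact h3
end AuxRpow

set_option maxHeartbeats 1000000

/-- the bound underlying the estimate of `C_{n,2}(D,λ,μ)`:
`‖T^{1/2}(V(V*SV+μ)^{-1}V*S − I)(I−P)‖ ≤ (Q_μ Q*_μ + 1) μ^{1/2} Q_{n,μ}`. -/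
theorem stmt18
    {H K : Type*}
    [NormedAddCommGroup H] [InnerProductSpace ℝ H] [CompleteSpace H]
    [TopologicalSpace.SeparableSpace H]
    [NormedAddCommGroup K] [InnerProductSpace ℝ K] [CompleteSpace K]
    [TopologicalSpace.SeparableSpace K]
    [ContinuousFunctionalCalculus ℝ (H →L[ℝ] H) (IsSelfAdjoint : (H →L[ℝ] H) → Prop)]
    [ContinuousFunctionalCalculus ℝ (K →L[ℝ] K) (IsSelfAdjoint : (K →L[ℝ] K) → Prop)]
    (T S Sn : H →L[ℝ] H) (hT : T.IsPositive) (hS : S.IsPositive) (hSn : Sn.IsPositive)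
    (V : K →L[ℝ] H) (hV : adjoint V ∘L V = 1)
    (P : H →L[ℝ] H) (hPsa : IsSelfAdjoint P) (hPidem : P ∘L P = P)
    (hPrange : LinearMap.range (P : H →ₗ[ℝ] H) = (LinearMap.range (Sn : H →ₗ[ℝ] H)).topologicalClosure)
    (hVP : V ∘L adjoint V = P)
    (mu : ℝ) (hmu : 0 < mu)
    (Qmu Qsmu Qn : ℝ)
    (hQmu : Qmu = ‖opow (S + mu • 1) (-(1 / 2)) ∘L opow (T + mu • 1) (1 / 2)‖)
    (hQsmu : Qsmu = ‖opow (T + mu • 1) (-(1 / 2)) ∘L opow (S + mu • 1) (1 / 2)‖)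
    (hQn : Qn = ‖opow (Sn + mu • 1) (-(1 / 2)) ∘L opow (T + mu • 1) (1 / 2)‖) :
    ‖opow T (1 / 2) ∘L
        (V ∘L opow (adjoint V ∘L S ∘L V + mu • 1) (-1) ∘L adjoint V ∘L S - 1) ∘L
        (1 - P)‖ ≤
      (Qmu * Qsmu + 1) * mu ^ (1 / 2 : ℝ) * Qn := by
  have hTsa : IsSelfAdjoint T := hT.isSelfAdjoint
  have hSsa : IsSelfAdjoint S := hS.isSelfAdjoint
  have hSnsa : IsSelfAdjoint Sn := hSn.isSelfAdjoint
  have hm : (adjoint V ∘L S ∘L V).IsPositive := by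
    have := hS.conj_adjoint (adjoint V)
    rwa [adjoint_adjoint] at this
  have hmsa : IsSelfAdjoint (adjoint V ∘L S ∘L V) := hm.isSelfAdjoint
  have spT : spectrum ℝ T ⊆ Set.Ici (0:ℝ) := fun x hx =>
    spectrum_nonneg_of_nonneg ((ContinuousLinearMap.nonneg_iff_isPositive T).2 hT) hx
  have spS : spectrum ℝ S ⊆ Set.Ici (0:ℝ) := fun x hx =>
    spectrum_nonneg_of_nonneg ((ContinuousLinearMap.nonneg_iff_isPositive S).2 hS) hx
  have spSn : spectrum ℝ Sn ⊆ Set.Ici (0:ℝ) := fun x hx =>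
    spectrum_nonneg_of_nonneg ((ContinuousLinearMap.nonneg_iff_isPositive Sn).2 hSn) hx
  have spm : spectrum ℝ (adjoint V ∘L S ∘L V) ⊆ Set.Ici (0:ℝ) := fun x hx =>
    spectrum_nonneg_of_nonneg
      ((ContinuousLinearMap.nonneg_iff_isPositive (adjoint V ∘L S ∘L V)).2 hm) hx
  rw [aux_opow_shift S hSsa spS mu (-(1/2)) hmu, aux_opow_shift T hTsa spT mu (1/2) hmu] at hQmu
  rw [aux_opow_shift T hTsa spT mu (-(1/2)) hmu, aux_opow_shift S hSsa spS mu (1/2) hmu] at hQsmu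
  rw [aux_opow_shift Sn hSnsa spSn mu (-(1/2)) hmu,
    aux_opow_shift T hTsa spT mu (1/2) hmu] at hQn
  rw [aux_opow_shift (adjoint V ∘L S ∘L V) hmsa spm mu (-1) hmu,
    show opow T (1/2) = cfc (fun x : ℝ => x ^ (1/2 : ℝ)) T from rfl]
  set Th := cfc (fun x : ℝ => x ^ (1/2 : ℝ)) T with hTh_def
  set eh := cfc (fun x : ℝ => (x + mu) ^ (1/2 : ℝ)) T with heh_def
  set emh := cfc (fun x : ℝ => (x + mu) ^ (-(1/2) : ℝ)) T with hemh_def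
  set fh := cfc (fun x : ℝ => (x + mu) ^ (1/2 : ℝ)) S with hfh_def
  set fmh := cfc (fun x : ℝ => (x + mu) ^ (-(1/2) : ℝ)) S with hfmh_def
  set gmh := cfc (fun x : ℝ => (x + mu) ^ (-(1/2) : ℝ)) Sn with hgmh_def
  set B := cfc (fun x : ℝ => (x + mu) ^ (-1 : ℝ)) (adjoint V ∘L S ∘L V) with hB_def
  set u := cfc (fun x : ℝ => x ^ (1/2 : ℝ) * (x + mu) ^ (-(1/2) : ℝ)) T with hu_def
  set Rr := cfc (fun x : ℝ => x * (x + mu) ^ (-1 : ℝ)) S with hRr_def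
  -- continuity facts
  have cT_h : ContinuousOn (fun x : ℝ => (x + mu) ^ (1/2 : ℝ)) (spectrum ℝ T) :=
    aux_contOn_shift_rpow mu _ hmu spT
  have cT_mh : ContinuousOn (fun x : ℝ => (x + mu) ^ (-(1/2) : ℝ)) (spectrum ℝ T) :=
    aux_contOn_shift_rpow mu _ hmu spT
  have cS_h : ContinuousOn (fun x : ℝ => (x + mu) ^ (1/2 : ℝ)) (spectrum ℝ S) :=
    aux_contOn_shift_rpow mu _ hmu spS
  have cS_m1 : ContinuousOn (fun x : ℝ => (x + mu) ^ (-1 : ℝ)) (spectrum ℝ S) :=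
    aux_contOn_shift_rpow mu _ hmu spS
  have cu : ContinuousOn (fun x : ℝ => x ^ (1/2 : ℝ) * (x + mu) ^ (-(1/2) : ℝ))
      (spectrum ℝ T) :=
    (aux_contOn_rpow_nonneg (1/2) (by norm_num) _).mul cT_mh
  have cRr : ContinuousOn (fun x : ℝ => x * (x + mu) ^ (-1 : ℝ)) (spectrum ℝ S) :=
    continuousOn_id.mul cS_m1
  -- operator identities
  have O1 : emh ∘L eh = 1 := by
    rw [hemh_def, heh_def, ← ContinuousLinearMap.mul_def,
      aux_rpow_mul T hTsa spT mu (-(1/2)) (1/2) hmu,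
      show (-(1/2) + (1/2) : ℝ) = 0 by norm_num]
    exact aux_rpow_zero T hTsa mu
  have O2 : fmh ∘L fh = 1 := by
    rw [hfmh_def, hfh_def, ← ContinuousLinearMap.mul_def,
      aux_rpow_mul S hSsa spS mu (-(1/2)) (1/2) hmu,
      show (-(1/2) + (1/2) : ℝ) = 0 by norm_num]
    exact aux_rpow_zero S hSsa mu
  have O3 : u ∘L eh = Th := by
    rw [hu_def, heh_def, hTh_def, ← ContinuousLinearMap.mul_def, ← cfc_mul _ _ T cu cT_h]
    refine cfc_congr fun x hx => ?_
    have hx0 : (0:ℝ) ≤ x := spT hx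
    have h : (x + mu) ^ (-(1/2) : ℝ) * (x + mu) ^ (1/2 : ℝ) = 1 := by
      rw [← Real.rpow_add (by positivity)]
      norm_num
    rw [mul_assoc, h, mul_one]
  have O4 : fh ∘L (Rr ∘L fh) = S := by
    rw [hfh_def, hRr_def, ← ContinuousLinearMap.mul_def, ← ContinuousLinearMap.mul_def,
      ← cfc_mul _ _ S cRr cS_h, ← cfc_mul (fun x : ℝ => (x + mu) ^ (1/2 : ℝ))
        (fun x : ℝ => x * (x + mu) ^ (-1 : ℝ) * (x + mu) ^ (1/2 : ℝ)) S cS_h (cRr.mul cS_h)]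
    refine Eq.trans (cfc_congr (g := fun x : ℝ => x) fun x hx => ?_) (cfc_id' ℝ S hSsa)
    show (x + mu) ^ (1/2 : ℝ) * (x * (x + mu) ^ (-1:ℝ) * (x + mu) ^ (1/2:ℝ)) = x
    have hx0 : (0:ℝ) ≤ x := spS hx
    have ha : (0:ℝ) < x + mu := by positivity
    have h1 : (x + mu) ^ (1/2 : ℝ) * (x + mu) ^ (1/2 : ℝ) = x + mu := by
      rw [← Real.rpow_add ha]
      norm_num
    have h2 : (x + mu) ^ (-1 : ℝ) = (x + mu)⁻¹ := Real.rpow_neg_one _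
    calc (x + mu) ^ (1/2 : ℝ) * (x * (x + mu) ^ (-1:ℝ) * (x + mu) ^ (1/2:ℝ))
        = x * (x + mu)⁻¹ * ((x + mu) ^ (1/2:ℝ) * (x + mu) ^ (1/2:ℝ)) := by rw [h2]; ring
      _ = x * (x + mu)⁻¹ * (x + mu) := by rw [h1]
      _ = x := by field_simp
  have O5 : fh ∘L fh = S + mu • 1 := by
    rw [hfh_def, ← ContinuousLinearMap.mul_def,
      aux_rpow_mul S hSsa spS mu (1/2) (1/2) hmu,
      show ((1/2) + (1/2) : ℝ) = 1 by norm_num]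
    exact aux_rpow_one S hSsa spS mu hmu
  have O6 : adjoint V ∘L ((S + mu • 1) ∘L V) = (adjoint V ∘L S ∘L V) + mu • 1 := by
    rw [ContinuousLinearMap.add_comp, ContinuousLinearMap.smul_comp,
      ContinuousLinearMap.one_def, ContinuousLinearMap.id_comp,
      ContinuousLinearMap.comp_add, ContinuousLinearMap.comp_smul, hV]
  have O7 : B ∘L (((adjoint V ∘L S ∘L V) + mu • 1) ∘L B) = B := by
    rw [← aux_rpow_one (adjoint V ∘L S ∘L V) hmsa spm mu hmu, hB_def]
    simp only [← ContinuousLinearMap.mul_def]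
    rw [← mul_assoc, aux_rpow_mul (adjoint V ∘L S ∘L V) hmsa spm mu (-1) (1) hmu,
      show ((-1) + (1) : ℝ) = 0 by norm_num, aux_rpow_zero _ hmsa mu, one_mul]
  -- pointwise versions
  have p1 : ∀ z : H, emh (eh z) = z := fun z => by
    have := ContinuousLinearMap.ext_iff.mp O1 z
    simpa only [ContinuousLinearMap.comp_apply, ContinuousLinearMap.add_apply,
      ContinuousLinearMap.smul_apply, ContinuousLinearMap.one_apply,
      ContinuousLinearMap.sub_apply] using this
  have p2 : ∀ z : H, fmh (fh z) = z := fun z => by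
    have := ContinuousLinearMap.ext_iff.mp O2 z
    simpa only [ContinuousLinearMap.comp_apply, ContinuousLinearMap.add_apply,
      ContinuousLinearMap.smul_apply, ContinuousLinearMap.one_apply,
      ContinuousLinearMap.sub_apply] using this
  have p3 : ∀ z : H, u (eh z) = Th z := fun z => by
    have := ContinuousLinearMap.ext_iff.mp O3 z
    simpa only [ContinuousLinearMap.comp_apply, ContinuousLinearMap.add_apply,
      ContinuousLinearMap.smul_apply, ContinuousLinearMap.one_apply,
      ContinuousLinearMap.sub_apply] using this
  have p4 : ∀ z : H, fh (Rr (fh z)) = S z := fun z => by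
    have := ContinuousLinearMap.ext_iff.mp O4 z
    simpa only [ContinuousLinearMap.comp_apply, ContinuousLinearMap.add_apply,
      ContinuousLinearMap.smul_apply, ContinuousLinearMap.one_apply,
      ContinuousLinearMap.sub_apply] using this
  have pfhfh : ∀ z : H, fh (fh z) = S z + mu • z := fun z => by
    have := ContinuousLinearMap.ext_iff.mp O5 z
    simpa only [ContinuousLinearMap.comp_apply, ContinuousLinearMap.add_apply,
      ContinuousLinearMap.smul_apply, ContinuousLinearMap.one_apply,
      ContinuousLinearMap.sub_apply] using this
  have pVfV : ∀ w : K, adjoint V (S (V w) + mu • V w)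
      = adjoint V (S (V w)) + mu • w := fun w => by
    have := ContinuousLinearMap.ext_iff.mp O6 w
    simpa only [ContinuousLinearMap.comp_apply, ContinuousLinearMap.add_apply,
      ContinuousLinearMap.smul_apply, ContinuousLinearMap.one_apply,
      ContinuousLinearMap.sub_apply] using this
  have pBkB : ∀ v : K, B (adjoint V (S (V (B v))) + mu • B v) = B v := fun v => by
    have := ContinuousLinearMap.ext_iff.mp O7 v
    simpa only [ContinuousLinearMap.comp_apply, ContinuousLinearMap.add_apply,
      ContinuousLinearMap.smul_apply, ContinuousLinearMap.one_apply,
      ContinuousLinearMap.sub_apply] using this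
  -- the projection Pi
  set Pi := fh ∘L ((V ∘L (B ∘L adjoint V)) ∘L fh) with hPi_def
  have hPiIdem : Pi ∘L Pi = Pi := by
    rw [hPi_def]
    ext x
    simp only [ContinuousLinearMap.comp_apply]
    rw [pfhfh, pVfV, pBkB]
  have hfhsa : IsSelfAdjoint fh := hfh_def ▸ cfc_predicate _ S
  have hehsa : IsSelfAdjoint eh := heh_def ▸ cfc_predicate _ T
  have hemhsa : IsSelfAdjoint emh := hemh_def ▸ cfc_predicate _ T
  have hfmhsa : IsSelfAdjoint fmh := hfmh_def ▸ cfc_predicate _ S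
  have hgmhsa : IsSelfAdjoint gmh := hgmh_def ▸ cfc_predicate _ Sn
  have hBsa : IsSelfAdjoint B := hB_def ▸ cfc_predicate _ _
  have hPisa : IsSelfAdjoint Pi := by
    rw [hPi_def]
    show star _ = _
    rw [ContinuousLinearMap.star_eq_adjoint, adjoint_comp, adjoint_comp, adjoint_comp,
      adjoint_comp, adjoint_adjoint, hfhsa.adjoint_eq, hBsa.adjoint_eq]
    ext x
    simp only [ContinuousLinearMap.comp_apply]
  -- 1 - P facts
  have hQsa : IsSelfAdjoint ((1 : H →L[ℝ] H) - P) := (IsSelfAdjoint.one (R := H →L[ℝ] H)).sub hPsa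
  have hPP : P * P = P := hPidem
  have hQidem : ((1 : H →L[ℝ] H) - P) ∘L ((1 : H →L[ℝ] H) - P) = (1 : H →L[ℝ] H) - P := by
    show ((1 : H →L[ℝ] H) - P) * ((1 : H →L[ℝ] H) - P) = (1 : H →L[ℝ] H) - P
    rw [mul_sub, sub_mul, sub_mul, one_mul, mul_one, hPP]
    abel
  have hPSn : P ∘L Sn = Sn := by
    ext x
    have hmem : Sn x ∈ LinearMap.range (P : H →ₗ[ℝ] H) := by
      rw [hPrange]
      exact Submodule.le_topologicalClosure _ (LinearMap.mem_range_self _ x)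
    obtain ⟨y, hy⟩ := hmem
    show P (Sn x) = Sn x
    rw [← hy]
    have := ContinuousLinearMap.ext_iff.mp hPidem y
    simpa only [ContinuousLinearMap.coe_coe, ContinuousLinearMap.comp_apply, ContinuousLinearMap.add_apply,
      ContinuousLinearMap.smul_apply, ContinuousLinearMap.one_apply,
      ContinuousLinearMap.sub_apply] using this
  have hSnP : Sn ∘L P = Sn := by
    have h := congrArg star hPSn
    rwa [← ContinuousLinearMap.mul_def, star_mul, hSnsa.star_eq, hPsa.star_eq,
      ContinuousLinearMap.mul_def] at h
  have hSnQ : Sn ∘L ((1 : H →L[ℝ] H) - P) = (0:ℝ) • ((1 : H →L[ℝ] H) - P) := by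
    rw [ContinuousLinearMap.comp_sub, hSnP, ContinuousLinearMap.one_def,
      ContinuousLinearMap.comp_id, sub_self, zero_smul]
  have hgQ : gmh ∘L ((1 : H →L[ℝ] H) - P)
      = mu ^ (-(1/2) : ℝ) • ((1 : H →L[ℝ] H) - P) := by
    have := aux_cfc_comp_smul Sn ((1 : H →L[ℝ] H) - P) 0 hSnsa hSnQ
      (fun x : ℝ => (x + mu) ^ (-(1/2) : ℝ)) (aux_contOn_shift_rpow mu _ hmu spSn)
    rw [hgmh_def]
    have h2 : ((fun x : ℝ => (x + mu) ^ (-(1/2) : ℝ)) 0) = mu ^ (-(1/2) : ℝ) := by norm_num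
    rwa [zero_add] at this
  have pgQ : ∀ z : H, gmh (z - P z) = mu ^ (-(1/2) : ℝ) • (z - P z) := fun z => by
    have := ContinuousLinearMap.ext_iff.mp hgQ z
    simpa only [ContinuousLinearMap.comp_apply, ContinuousLinearMap.add_apply,
      ContinuousLinearMap.smul_apply, ContinuousLinearMap.one_apply,
      ContinuousLinearMap.sub_apply] using this
  -- key factorization identity
  have key : Th ∘L ((V ∘L (B ∘L (adjoint V ∘L S)) - 1) ∘L ((1 : H →L[ℝ] H) - P))
      = mu ^ (1/2 : ℝ) •
        (u ∘L (((eh ∘L fmh) ∘L (Pi ∘L (Rr ∘L (fh ∘L emh))) - 1)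
          ∘L ((eh ∘L gmh) ∘L ((1 : H →L[ℝ] H) - P)))) := by
    rw [hPi_def]
    ext x
    simp only [ContinuousLinearMap.comp_apply, ContinuousLinearMap.sub_apply,
      ContinuousLinearMap.one_apply, ContinuousLinearMap.smul_apply]
    rw [p1, p4, p2, pgQ]
    simp only [map_smul]
    rw [← smul_sub, map_smul, smul_smul, ← Real.rpow_add hmu,
      show ((1/2 : ℝ) + (-(1/2) : ℝ)) = 0 by norm_num, Real.rpow_zero, one_smul]
    simp only [map_sub, p3]
  -- norm facts
  have hQmu0 : (0:ℝ) ≤ Qmu := hQmu ▸ norm_nonneg _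
  have hQsmu0 : (0:ℝ) ≤ Qsmu := hQsmu ▸ norm_nonneg _
  have hQn0 : (0:ℝ) ≤ Qn := hQn ▸ norm_nonneg _
  have hstar_norm : ∀ a b : H →L[ℝ] H, IsSelfAdjoint a → IsSelfAdjoint b →
      ‖a ∘L b‖ = ‖b ∘L a‖ := by
    intro a b ha hb
    rw [← ContinuousLinearMap.mul_def, ← ContinuousLinearMap.mul_def]
    conv_lhs => rw [← norm_star, star_mul, ha.star_eq, hb.star_eq]
  have hEE : ‖eh ∘L fmh‖ = Qmu := by rw [hstar_norm eh fmh hehsa hfmhsa, hQmu]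
  have hFF : ‖fh ∘L emh‖ = Qsmu := by rw [hstar_norm fh emh hfhsa hemhsa, hQsmu]
  have hWn : ‖eh ∘L gmh‖ = Qn := by rw [hstar_norm eh gmh hehsa hgmhsa, hQn]
  have hu_norm : ‖u‖ ≤ 1 := by
    rw [hu_def]
    apply aux_norm_cfc_le_one T hTsa _ cu
    intro x hx
    have hx0 : (0:ℝ) ≤ x := spT hx
    have ha : (0:ℝ) < x + mu := by positivity
    have h1 : x ^ (1/2:ℝ) * x ^ (1/2:ℝ) = x := by
      rw [← Real.rpow_add' hx0 (by norm_num)]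
      norm_num
    have h2 : (x+mu) ^ (-(1/2):ℝ) * (x+mu) ^ (-(1/2):ℝ) = (x+mu)⁻¹ := by
      rw [← Real.rpow_add ha, show (-(1/2) + -(1/2) : ℝ) = -1 by norm_num,
        Real.rpow_neg_one]
    calc x ^ (1/2:ℝ) * (x+mu) ^ (-(1/2):ℝ) * (x ^ (1/2:ℝ) * (x+mu) ^ (-(1/2):ℝ))
        = (x ^ (1/2:ℝ) * x ^ (1/2:ℝ)) * ((x+mu) ^ (-(1/2):ℝ) * (x+mu) ^ (-(1/2):ℝ)) := by
          ring
      _ = x * (x+mu)⁻¹ := by rw [h1, h2]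
      _ ≤ 1 := by
          rw [← div_eq_mul_inv]
          exact (div_le_one ha).2 (by linarith)
  have hR_norm : ‖Rr‖ ≤ 1 := by
    rw [hRr_def]
    apply aux_norm_cfc_le_one S hSsa _ cRr
    intro x hx
    have hx0 : (0:ℝ) ≤ x := spS hx
    have ha : (0:ℝ) < x + mu := by positivity
    have h2 : (x+mu) ^ (-1:ℝ) = (x+mu)⁻¹ := Real.rpow_neg_one _
    have h3 : x * (x+mu)⁻¹ ≤ 1 := by
      rw [← div_eq_mul_inv]
      exact (div_le_one ha).2 (by linarith)
    have h4 : (0:ℝ) ≤ x * (x+mu)⁻¹ := by positivity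
    rw [h2]
    nlinarith
  have hPi_norm : ‖Pi‖ ≤ 1 := aux_norm_le_one_of_idem Pi hPisa hPiIdem
  have hQp_norm : ‖(1 : H →L[ℝ] H) - P‖ ≤ 1 := aux_norm_le_one_of_idem _ hQsa hQidem
  have hone : ‖(1 : H →L[ℝ] H)‖ ≤ 1 := by
    rw [ContinuousLinearMap.one_def]
    exact ContinuousLinearMap.norm_id_le
  have hns : ∀ (c : ℝ) (A : H →L[ℝ] H), 0 ≤ c → ‖c • A‖ = c * ‖A‖ := fun c A hc => by
    rw [norm_smul c A, Real.norm_eq_abs, abs_of_nonneg hc]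
  rw [key, hns _ _ (Real.rpow_nonneg hmu.le _)]
  have hN : ‖(eh ∘L fmh) ∘L (Pi ∘L (Rr ∘L (fh ∘L emh)))‖ ≤ Qmu * Qsmu := by
    calc ‖(eh ∘L fmh) ∘L (Pi ∘L (Rr ∘L (fh ∘L emh)))‖
        ≤ ‖eh ∘L fmh‖ * ‖Pi ∘L (Rr ∘L (fh ∘L emh))‖ :=
          ContinuousLinearMap.opNorm_comp_le _ _
      _ ≤ Qmu * (1 * (1 * Qsmu)) := by
          rw [hEE]
          refine mul_le_mul_of_nonneg_left ?_ hQmu0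
          calc ‖Pi ∘L (Rr ∘L (fh ∘L emh))‖ ≤ ‖Pi‖ * ‖Rr ∘L (fh ∘L emh)‖ :=
                ContinuousLinearMap.opNorm_comp_le _ _
            _ ≤ 1 * (1 * Qsmu) := by
                refine mul_le_mul hPi_norm ?_ (norm_nonneg _) zero_le_one
                calc ‖Rr ∘L (fh ∘L emh)‖ ≤ ‖Rr‖ * ‖fh ∘L emh‖ :=
                      ContinuousLinearMap.opNorm_comp_le _ _
                  _ ≤ 1 * Qsmu :=
                      mul_le_mul hR_norm (le_of_eq hFF) (norm_nonneg _) zero_le_one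
      _ = Qmu * Qsmu := by ring
  have hM : ‖(eh ∘L fmh) ∘L (Pi ∘L (Rr ∘L (fh ∘L emh))) - 1‖ ≤ Qmu * Qsmu + 1 :=
    le_trans (norm_sub_le _ _) (add_le_add hN hone)
  have htail : ‖(eh ∘L gmh) ∘L ((1 : H →L[ℝ] H) - P)‖ ≤ Qn := by
    calc ‖(eh ∘L gmh) ∘L ((1 : H →L[ℝ] H) - P)‖
        ≤ ‖eh ∘L gmh‖ * ‖(1 : H →L[ℝ] H) - P‖ := ContinuousLinearMap.opNorm_comp_le _ _
      _ ≤ Qn * 1 := mul_le_mul (le_of_eq hWn) hQp_norm (norm_nonneg _) hQn0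
      _ = Qn := mul_one _
  have hmid : ‖((eh ∘L fmh) ∘L (Pi ∘L (Rr ∘L (fh ∘L emh))) - 1)
      ∘L ((eh ∘L gmh) ∘L ((1 : H →L[ℝ] H) - P))‖ ≤ (Qmu * Qsmu + 1) * Qn :=
    le_trans (ContinuousLinearMap.opNorm_comp_le _ _)
      (mul_le_mul hM htail (norm_nonneg _)
        (add_nonneg (mul_nonneg hQmu0 hQsmu0) zero_le_one))
  have hfinal : ‖u ∘L (((eh ∘L fmh) ∘L (Pi ∘L (Rr ∘L (fh ∘L emh))) - 1)
      ∘L ((eh ∘L gmh) ∘L ((1 : H →L[ℝ] H) - P)))‖ ≤ (Qmu * Qsmu + 1) * Qn := by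
    refine le_trans (ContinuousLinearMap.opNorm_comp_le _ _) ?_
    refine le_trans (mul_le_mul hu_norm hmid (norm_nonneg _) zero_le_one) ?_
    rw [one_mul]
  refine le_trans (mul_le_mul_of_nonneg_left hfinal (Real.rpow_nonneg hmu.le _))
    (le_of_eq (by ring))
end

section
/- Let H be a real separable Hilbert space, let T and S be positive bounded linear operators on H, and let λ > 0. If ‖(T + λI)^{-1/2}(T − S)(T + λI)^{-1/2}‖ ≤ 1/4, then ‖(S + λI)^{-1/2}(T − S)(S + λI)^{-1/2}‖ ≤ 1/3. -/
open ContinuousLinearMap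

section Aux

variable {H : Type*} [NormedAddCommGroup H] [InnerProductSpace ℝ H] [CompleteSpace H]

open scoped RealInnerProductSpace

/-- A symmetric operator whose quadratic form is bounded by `c * ‖x‖²` has norm at most `c`. -/
lemma aux_norm_le_of_form (B : H →L[ℝ] H) (hB : LinearMap.IsSymmetric (B : H →ₗ[ℝ] H))
    (c : ℝ) (hc : 0 ≤ c) (h : ∀ x : H, |⟪B x, x⟫| ≤ c * ‖x‖ ^ 2) : ‖B‖ ≤ c := by
  have key : ∀ x y : H, 4 * ⟪B x, y⟫ ≤ 2 * c * (‖x‖ ^ 2 + ‖y‖ ^ 2) := by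
    intro x y
    have h2 : ⟪B y, x⟫ = ⟪B x, y⟫ := by
      have := hB y x
      simp only [ContinuousLinearMap.coe_coe] at this
      rw [this, real_inner_comm]
    have e1 : ⟪B (x + y), x + y⟫ = ⟪B x, x⟫ + 2 * ⟪B x, y⟫ + ⟪B y, y⟫ := by
      simp only [map_add, inner_add_left, inner_add_right]
      linarith [h2]
    have e2 : ⟪B (x - y), x - y⟫ = ⟪B x, x⟫ - 2 * ⟪B x, y⟫ + ⟪B y, y⟫ := by
      simp only [map_sub, inner_sub_left, inner_sub_right]
      linarith [h2]
    have b1 := abs_le.mp (h (x + y))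
    have b2 := abs_le.mp (h (x - y))
    have p1 : ‖x + y‖ ^ 2 = ‖x‖ ^ 2 + 2 * ⟪x, y⟫ + ‖y‖ ^ 2 := norm_add_sq_real x y
    have p2 : ‖x - y‖ ^ 2 = ‖x‖ ^ 2 - 2 * ⟪x, y⟫ + ‖y‖ ^ 2 := norm_sub_sq_real x y
    nlinarith [b1.2, b2.1, e1, e2]
  refine B.opNorm_le_bound hc (fun x => ?_)
  by_cases hx0 : B x = 0
  · simp [hx0, mul_nonneg hc (norm_nonneg x)]
  · have hb : (0:ℝ) < ‖B x‖ := norm_pos_iff.mpr hx0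
    set a := ‖x‖ with ha
    set b := ‖B x‖ with hbdef
    have := key x ((a / b) • B x)
    have e3 : ⟪B x, (a / b) • B x⟫ = (a / b) * b ^ 2 := by
      rw [real_inner_smul_right, real_inner_self_eq_norm_sq]
    have e4 : ‖(a / b) • B x‖ ^ 2 = (a / b) ^ 2 * b ^ 2 := by
      rw [norm_smul, mul_pow, Real.norm_eq_abs, sq_abs]
    rw [e3, e4] at this
    have hab : (a / b) * b ^ 2 = a * b := by field_simp
    have hab2 : (a / b) ^ 2 * b ^ 2 = a ^ 2 := by field_simp
    rw [hab, hab2] at this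
    -- 4 a b ≤ 2 c (a² + a²) = 4 c a²
    have ha0 : 0 ≤ a := norm_nonneg x
    rcases eq_or_lt_of_le ha0 with h0 | h0
    · have : x = 0 := norm_eq_zero.mp h0.symm
      simp [this] at hx0
    · nlinarith
end Aux

section CFCAux

variable {H : Type*} [NormedAddCommGroup H] [InnerProductSpace ℝ H] [CompleteSpace H]
  [ContinuousFunctionalCalculus ℝ (H →L[ℝ] H) (IsSelfAdjoint : (H →L[ℝ] H) → Prop)]

open scoped RealInnerProductSpace

lemma aux_spectrum_pos {A : H →L[ℝ] H} (hA : A.IsPositive) {lam : ℝ} (hlam : 0 < lam) :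
    ∀ x ∈ spectrum ℝ (A + lam • (1 : H →L[ℝ] H)), 0 < x := by
  have hrw : A + lam • (1 : H →L[ℝ] H) = algebraMap ℝ (H →L[ℝ] H) lam + A := by
    rw [Algebra.algebraMap_eq_smul_one, add_comm]
  intro x hx
  rw [hrw, ← spectrum.singleton_add_eq] at hx
  obtain ⟨a, ha, b, hb, rfl⟩ := Set.mem_add.mp hx
  rw [Set.mem_singleton_iff] at ha
  subst ha
  have hb0 : 0 ≤ b := SpectrumRestricts.nnreal_iff.mp hA.spectrumRestricts b hb
  linarith

lemma aux_isSelfAdjoint_add {A : H →L[ℝ] H} (hA : A.IsPositive) (lam : ℝ) :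
    IsSelfAdjoint (A + lam • (1 : H →L[ℝ] H)) := by
  refine hA.isSelfAdjoint.add ?_
  rw [IsSelfAdjoint, star_smul, star_one, star_trivial]

lemma aux_contOn {N : H →L[ℝ] H} (hpos : ∀ x ∈ spectrum ℝ N, 0 < x) (t : ℝ) :
    ContinuousOn (fun x : ℝ => x ^ t) (spectrum ℝ N) := by
  intro x hx
  exact (Real.continuousAt_rpow_const x t (Or.inl (ne_of_gt (hpos x hx)))).continuousWithinAt

lemma aux_opow_mul {N : H →L[ℝ] H} (hN : IsSelfAdjoint N)
    (hpos : ∀ x ∈ spectrum ℝ N, 0 < x) (s t : ℝ) :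
    opow N s * opow N t = opow N (s + t) := by
  rw [opow, opow, opow, ← cfc_mul _ _ N (aux_contOn hpos s) (aux_contOn hpos t)]
  exact cfc_congr fun x hx => (Real.rpow_add (hpos x hx) s t).symm

lemma aux_opow_zero {N : H →L[ℝ] H} (hN : IsSelfAdjoint N) : opow N 0 = 1 := by
  rw [opow]
  have : cfc (fun x : ℝ => x ^ (0:ℝ)) N = cfc (fun _ : ℝ => (1:ℝ)) N :=
    cfc_congr fun x _ => Real.rpow_zero x
  rw [this, cfc_const_one ℝ N]

lemma aux_opow_one {N : H →L[ℝ] H} (hN : IsSelfAdjoint N) : opow N 1 = N := by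
  rw [opow]
  have : cfc (fun x : ℝ => x ^ (1:ℝ)) N = cfc (fun x : ℝ => x) N :=
    cfc_congr fun x _ => Real.rpow_one x
  rw [this, cfc_id' ℝ N]

lemma aux_opow_isSelfAdjoint (N : H →L[ℝ] H) (t : ℝ) : IsSelfAdjoint (opow N t) :=
  cfc_predicate _ N

lemma aux_opow_symm (N : H →L[ℝ] H) (t : ℝ) (x y : H) :
    ⟪opow N t x, y⟫ = ⟪x, opow N t y⟫ := by
  have := (isSelfAdjoint_iff_isSymmetric.mp (aux_opow_isSelfAdjoint N t)) x y
  simpa using this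

/-- The quadratic form of `N` equals the squared norm of `opow N (1/2)`. -/
lemma aux_form_eq {N : H →L[ℝ] H} (hN : IsSelfAdjoint N)
    (hpos : ∀ x ∈ spectrum ℝ N, 0 < x) (f : H) :
    ⟪N f, f⟫ = ‖opow N (1/2) f‖ ^ 2 := by
  have hQQ : opow N (1/2) * opow N (1/2) = N := by
    rw [aux_opow_mul hN hpos]
    norm_num
    exact aux_opow_one hN
  rw [show N f = opow N (1/2) (opow N (1/2) f) from by rw [← mul_apply_eq_comp, hQQ]]
  rw [aux_opow_symm, real_inner_self_eq_norm_sq]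

end CFCAux



section Main

variable {H : Type*} [NormedAddCommGroup H] [InnerProductSpace ℝ H] [CompleteSpace H]
  [ContinuousFunctionalCalculus ℝ (H →L[ℝ] H) (IsSelfAdjoint : (H →L[ℝ] H) → Prop)]

open scoped RealInnerProductSpace

lemma aux_dir1 {N C : H →L[ℝ] H} (hN : IsSelfAdjoint N)
    (hpos : ∀ x ∈ spectrum ℝ N, 0 < x) {c : ℝ}
    (h : ‖opow N (-(1 / 2)) ∘L C ∘L opow N (-(1 / 2))‖ ≤ c) (f : H) :
    |⟪C f, f⟫| ≤ c * ⟪N f, f⟫ := by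
  have hPQ : opow N (-(1/2)) * opow N (1/2) = 1 := by
    rw [aux_opow_mul hN hpos, show -(1/2 : ℝ) + 1/2 = 0 by norm_num, aux_opow_zero hN]
  have hPQf : opow N (-(1/2)) (opow N (1/2) f) = f := by
    rw [← mul_apply_eq_comp, hPQ, one_apply_eq_self]
  have e1 : ⟪(opow N (-(1/2)) ∘L C ∘L opow N (-(1/2))) (opow N (1/2) f), opow N (1/2) f⟫
      = ⟪C f, f⟫ := by
    simp only [comp_apply]
    rw [aux_opow_symm, hPQf]
  have e2 : ‖opow N (1/2) f‖ ^ 2 = ⟪N f, f⟫ := (aux_form_eq hN hpos f).symm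
  calc |⟪C f, f⟫|
      = |⟪(opow N (-(1/2)) ∘L C ∘L opow N (-(1/2))) (opow N (1/2) f), opow N (1/2) f⟫| := by
        rw [e1]
    _ ≤ ‖(opow N (-(1/2)) ∘L C ∘L opow N (-(1/2))) (opow N (1/2) f)‖ * ‖opow N (1/2) f‖ :=
        abs_real_inner_le_norm _ _
    _ ≤ (‖opow N (-(1/2)) ∘L C ∘L opow N (-(1/2))‖ * ‖opow N (1/2) f‖) * ‖opow N (1/2) f‖ :=
        mul_le_mul_of_nonneg_right (le_opNorm _ _) (norm_nonneg _)
    _ = ‖opow N (-(1/2)) ∘L C ∘L opow N (-(1/2))‖ * ‖opow N (1/2) f‖ ^ 2 := by ring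
    _ ≤ c * ⟪N f, f⟫ := by
        rw [← e2]
        exact mul_le_mul_of_nonneg_right h (sq_nonneg _)

lemma aux_dir2 {N C : H →L[ℝ] H} (hN : IsSelfAdjoint N) (hC : IsSelfAdjoint C)
    (hpos : ∀ x ∈ spectrum ℝ N, 0 < x) {c : ℝ} (hc : 0 ≤ c)
    (h : ∀ f : H, |⟪C f, f⟫| ≤ c * ⟪N f, f⟫) :
    ‖opow N (-(1 / 2)) ∘L C ∘L opow N (-(1 / 2))‖ ≤ c := by
  have hQP : opow N (1/2) * opow N (-(1/2)) = 1 := by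
    rw [aux_opow_mul hN hpos, show (1/2 : ℝ) + -(1/2) = 0 by norm_num, aux_opow_zero hN]
  have hQPx : ∀ x : H, opow N (1/2) (opow N (-(1/2)) x) = x := by
    intro x; rw [← mul_apply_eq_comp, hQP, one_apply_eq_self]
  have hCs := isSelfAdjoint_iff_isSymmetric.mp hC
  refine aux_norm_le_of_form _ ?_ c hc ?_
  · intro x y
    simp only [ContinuousLinearMap.coe_coe, comp_apply]
    calc ⟪opow N (-(1/2)) (C (opow N (-(1/2)) x)), y⟫
        = ⟪C (opow N (-(1/2)) x), opow N (-(1/2)) y⟫ := aux_opow_symm _ _ _ _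
      _ = ⟪opow N (-(1/2)) x, C (opow N (-(1/2)) y)⟫ := by
          have := hCs (opow N (-(1/2)) x) (opow N (-(1/2)) y)
          simpa using this
      _ = ⟪x, opow N (-(1/2)) (C (opow N (-(1/2)) y))⟫ := aux_opow_symm _ _ _ _
  · intro x
    have e1 : ⟪(opow N (-(1/2)) ∘L C ∘L opow N (-(1/2))) x, x⟫
        = ⟪C (opow N (-(1/2)) x), opow N (-(1/2)) x⟫ := by
      simp only [comp_apply]
      exact aux_opow_symm _ _ _ _
    have e2 : ⟪N (opow N (-(1/2)) x), opow N (-(1/2)) x⟫ = ‖x‖ ^ 2 := by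
      rw [aux_form_eq hN hpos, hQPx]
    calc |⟪(opow N (-(1/2)) ∘L C ∘L opow N (-(1/2))) x, x⟫|
        = |⟪C (opow N (-(1/2)) x), opow N (-(1/2)) x⟫| := by rw [e1]
      _ ≤ c * ⟪N (opow N (-(1/2)) x), opow N (-(1/2)) x⟫ := h _
      _ = c * ‖x‖ ^ 2 := by rw [e2]

end Main

open scoped RealInnerProductSpace

set_option maxHeartbeats 1000000 in
set_option synthInstance.maxHeartbeats 400000 in
/-- `R_{D,λ} ≤ 1/4` implies
`‖(S+λI)^{-1/2}(T−S)(S+λI)^{-1/2}‖ ≤ 1/3`. -/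
theorem stmt19
    {H : Type*} [NormedAddCommGroup H] [InnerProductSpace ℝ H] [CompleteSpace H]
    [TopologicalSpace.SeparableSpace H]
    [ContinuousFunctionalCalculus ℝ (H →L[ℝ] H) (IsSelfAdjoint : (H →L[ℝ] H) → Prop)]
    (T S : H →L[ℝ] H) (hT : T.IsPositive) (hS : S.IsPositive)
    (lam : ℝ) (hlam : 0 < lam)
    (hR : ‖opow (T + lam • 1) (-(1 / 2)) ∘L (T - S) ∘L opow (T + lam • 1) (-(1 / 2))‖
      ≤ 1 / 4) :
    ‖opow (S + lam • 1) (-(1 / 2)) ∘L (T - S) ∘L opow (S + lam • 1) (-(1 / 2))‖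
      ≤ 1 / 3 := by
  have hNT := aux_isSelfAdjoint_add hT lam
  have hNS := aux_isSelfAdjoint_add hS lam
  have hposT := aux_spectrum_pos hT hlam
  have hposS := aux_spectrum_pos hS hlam
  have hC : IsSelfAdjoint (T - S) := hT.isSelfAdjoint.sub hS.isSelfAdjoint
  have h1 : ∀ f : H, |⟪(T - S) f, f⟫| ≤ (1/4) * ⟪(T + lam • 1) f, f⟫ :=
    aux_dir1 hNT hposT hR
  have h2 : ∀ f : H, |⟪(T - S) f, f⟫| ≤ (1/3) * ⟪(S + lam • 1) f, f⟫ := by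
    intro f
    have e : ⟪(S + lam • 1) f, f⟫ = ⟪(T + lam • 1) f, f⟫ - ⟪(T - S) f, f⟫ := by
      simp only [add_apply, sub_apply, smul_apply, one_apply, inner_add_left, inner_sub_left]
      ring
    have hf := abs_le.mp (h1 f)
    have hn := abs_nonneg (⟪(T - S) f, f⟫)
    have hv := (h1 f)
    rw [e, abs_le]
    constructor <;> linarith [le_abs_self (⟪(T - S) f, f⟫), neg_abs_le (⟪(T - S) f, f⟫)]
  exact aux_dir2 hNS hC hposS (by norm_num) h2
end
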